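/- arXiv:1109.0046 — 3 statements merged into one kernel-verified Lean document; each statement's English description precedes it below -/
import Mathlib

section
/- Let m ≥ 1 and let 1 ≤ i ≤ m, 1 ≤ j ≤ m. Let e_i, e_j ∈ F_2[t_1,…,t_m] denote the i-th and j-th elementary symmetric polynomials in t_1,…,t_m. For each subset K of {1,…,m} with |K| = i OR j (bitwise or), choose an arbitrary monomial m_K of total degree i + j whose support is exactly K. Then e_i · e_j − Σ_K m_K belongs to the ideal J_m, the sum ranging over all subsets K ⊆ {1,…,m} with |K| = i OR j. (In particular, if i OR j > m the sum is empty and e_i · e_j ∈ J_m.) -/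
open MvPolynomial

/-- `J m` is the ideal of `F₂[t 1, …, t m]` generated by the elements
`t i ^ 2 * t j + t i * t j ^ 2` for `1 ≤ i, j ≤ m`. -/
noncomputable def J (m : ℕ) : Ideal (MvPolynomial (Fin m) (ZMod 2)) :=
  Ideal.span {p | ∃ i j : Fin m, p = X i ^ 2 * X j + X i * X j ^ 2}

namespace Stmt15Aux


lemma lor_eq_iff_testBit {x y : ℕ} :
    x ||| y = y ↔ ∀ i, (x.testBit i || y.testBit i) = y.testBit i := by
  constructor
  · intro h i; rw [← Nat.testBit_lor, h]
  · intro h; apply Nat.eq_of_testBit_eq; intro i; rw [Nat.testBit_lor]; exact h i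

lemma add_of_and_eq_zero : ∀ (x y : ℕ), x &&& y = 0 → x + y = x ||| y := by
  intro x
  induction x using Nat.binaryRec with
  | zero => intro y _; simp
  | bit a m IH =>
    intro y h
    obtain ⟨b, n, rfl⟩ : ∃ b n, y = Nat.bit b n := ⟨y.bodd, y.div2, (Nat.bit_bodd_div2 y).symm⟩
    rw [Nat.land_bit] at h
    have h2 : (a && b) = false ∧ m &&& n = 0 := by
      rw [Nat.bit_val] at h
      cases hab : a && b <;> rw [hab] at h <;> simp at h <;> simp [h]
    rw [Nat.lor_bit, Nat.bit_val, Nat.bit_val, Nat.bit_val, ← IH n h2.2]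
    have : a.toNat + b.toNat = (a || b).toNat := by
      cases a <;> cases b <;> simp_all
    omega

lemma and_xor_self {x y : ℕ} (h : x ||| y = y) : x &&& (y ^^^ x) = 0 := by
  rw [lor_eq_iff_testBit] at h
  apply Nat.eq_of_testBit_eq
  intro i
  have := h i
  simp only [Nat.testBit_land, Nat.testBit_xor, Nat.zero_testBit]
  revert this
  cases x.testBit i <;> cases y.testBit i <;> decide

lemma sub_of_subset {x y : ℕ} (h : x ||| y = y) : x + (y ^^^ x) = y := by
  rw [add_of_and_eq_zero _ _ (and_xor_self h)]
  rw [lor_eq_iff_testBit] at h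
  apply Nat.eq_of_testBit_eq
  intro i
  have := h i
  simp only [Nat.testBit_lor, Nat.testBit_xor]
  revert this
  cases x.testBit i <;> cases y.testBit i <;> decide

lemma subset_le {x y : ℕ} (h : x ||| y = y) : x ≤ y := by
  have := sub_of_subset h; omega

lemma add_eq_or_add_and (i j : ℕ) : i + j = (i ||| j) + (i &&& j) := by
  have h1 : (i &&& j) ||| j = j := by
    rw [lor_eq_iff_testBit]; intro b; simp only [Nat.testBit_land, Nat.testBit_lor]
    cases i.testBit b <;> cases j.testBit b <;> decide
  have h2 := sub_of_subset h1
  have h3 : i &&& (j ^^^ (i &&& j)) = 0 := by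
    apply Nat.eq_of_testBit_eq; intro b
    simp only [Nat.testBit_land, Nat.testBit_xor, Nat.zero_testBit]
    cases i.testBit b <;> cases j.testBit b <;> decide
  have h4 := add_of_and_eq_zero _ _ h3
  have h5 : i ||| (j ^^^ (i &&& j)) = i ||| j := by
    apply Nat.eq_of_testBit_eq; intro b
    simp only [Nat.testBit_lor, Nat.testBit_xor, Nat.testBit_land]
    cases i.testBit b <;> cases j.testBit b <;> decide
  omega

lemma lor_le_add (i j : ℕ) : i ||| j ≤ i + j := by
  have := add_eq_or_add_and i j; omega

lemma le_lor_left (i j : ℕ) : i ≤ i ||| j := by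
  apply subset_le
  rw [lor_eq_iff_testBit]; intro b; simp only [Nat.testBit_lor]
  cases i.testBit b <;> cases j.testBit b <;> decide

lemma bit_main {i j k s : ℕ} (heq : i + j = k + s) :
    ((i ||| k = k) ∧ (s ||| i = i)) ↔ k = i ||| j := by
  constructor
  · rintro ⟨hik, hsi⟩
    have hd := sub_of_subset hik   -- i + (k ^^^ i) = k
    have hds : (k ^^^ i) &&& s = 0 := by
      rw [lor_eq_iff_testBit] at hik hsi
      apply Nat.eq_of_testBit_eq; intro b
      have h1 := hik b; have h2 := hsi b
      simp only [Nat.testBit_land, Nat.testBit_xor, Nat.zero_testBit]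
      revert h1 h2
      cases i.testBit b <;> cases k.testBit b <;> cases s.testBit b <;> decide
    have hj : j = (k ^^^ i) ||| s := by
      rw [← add_of_and_eq_zero _ _ hds]; omega
    rw [hj]
    rw [lor_eq_iff_testBit] at hik hsi
    apply Nat.eq_of_testBit_eq; intro b
    have h1 := hik b; have h2 := hsi b
    simp only [Nat.testBit_lor, Nat.testBit_xor]
    revert h1 h2
    cases i.testBit b <;> cases k.testBit b <;> cases s.testBit b <;> decide
  · rintro rfl
    have h1 : i ||| (i ||| j) = i ||| j := by
      apply Nat.eq_of_testBit_eq; intro b; simp only [Nat.testBit_lor]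
      cases i.testBit b <;> cases j.testBit b <;> decide
    have h2 : s = i &&& j := by have := add_eq_or_add_and i j; omega
    subst h2
    refine ⟨h1, ?_⟩
    apply Nat.eq_of_testBit_eq; intro b
    simp only [Nat.testBit_lor, Nat.testBit_land]
    cases i.testBit b <;> cases j.testBit b <;> decide

lemma lor_step {r n : ℕ} : r ||| n = n ↔ (r % 2 ≤ n % 2 ∧ r / 2 ||| n / 2 = n / 2) := by
  rw [lor_eq_iff_testBit, lor_eq_iff_testBit]
  constructor
  · intro h
    constructor
    · have h0 := h 0
      simp only [Nat.testBit_zero] at h0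
      rcases Nat.mod_two_eq_zero_or_one r with hr | hr <;>
        rcases Nat.mod_two_eq_zero_or_one n with hn | hn <;>
          simp [hr, hn] at h0 ⊢
    · intro i
      have := h (i + 1)
      simpa only [Nat.testBit_add_one] using this
  · rintro ⟨h0, h⟩ i
    cases i with
    | zero =>
      simp only [Nat.testBit_zero]
      rcases Nat.mod_two_eq_zero_or_one r with hr | hr <;>
        rcases Nat.mod_two_eq_zero_or_one n with hn | hn <;>
          simp [hr, hn] at h0 ⊢
    | succ i =>
      simp only [Nat.testBit_add_one]
      exact h i

lemma choose_parity : ∀ n r : ℕ, n.choose r % 2 = 1 ↔ r ||| n = n := by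
  intro n
  induction n using Nat.strong_induction_on with
  | _ n IH =>
    intro r
    rcases Nat.eq_zero_or_pos n with h0 | hpos
    · subst h0
      cases r with
      | zero => simp
      | succ r => simp [Nat.choose]
    · have hmod := Choose.choose_modEq_choose_mod_mul_choose_div_nat (p := 2) (n := n) (k := r)
      unfold Nat.ModEq at hmod
      have IH2 := IH (n / 2) (Nat.div_lt_self hpos one_lt_two) (r / 2)
      rw [hmod, Nat.mul_mod, lor_step]
      by_cases hq : r / 2 ||| n / 2 = n / 2
      · have hc : (n / 2).choose (r / 2) % 2 = 1 := IH2.mpr hq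
        rcases Nat.mod_two_eq_zero_or_one n with hn | hn <;>
          rcases Nat.mod_two_eq_zero_or_one r with hr | hr <;>
            simp [hn, hr, hc, hq, Nat.choose]
      · have hc : (n / 2).choose (r / 2) % 2 = 0 := by
          rcases Nat.mod_two_eq_zero_or_one ((n / 2).choose (r / 2)) with h | h
          · exact h
          · exact absurd (IH2.mp h) hq
        rcases Nat.mod_two_eq_zero_or_one n with hn | hn <;>
          rcases Nat.mod_two_eq_zero_or_one r with hr | hr <;>
            simp [hn, hr, hc, hq, Nat.choose]
  

open Finset

variable {m : ℕ}

lemma gen_mem (x y : Fin m) :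
    (X x ^ 2 * X y + X x * X y ^ 2 : MvPolynomial (Fin m) (ZMod 2)) ∈ J m :=
  Ideal.subset_span ⟨x, y, rfl⟩

lemma split_prod (x y : Fin m) (hxy : x ≠ y) (f : Fin m → MvPolynomial (Fin m) (ZMod 2)) :
    ∏ z, f z = f x * f y * ∏ z ∈ (Finset.univ.erase x).erase y, f z := by
  rw [mul_assoc,
    Finset.mul_prod_erase (Finset.univ.erase x) f
      (show y ∈ Finset.univ.erase x by simp [hxy.symm]),
    Finset.mul_prod_erase Finset.univ f (Finset.mem_univ x)]

lemma split_sum (x y : Fin m) (hxy : x ≠ y) (f : Fin m → ℕ) :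
    ∑ z, f z = f x + f y + ∑ z ∈ (Finset.univ.erase x).erase y, f z := by
  rw [add_assoc,
    Finset.add_sum_erase (Finset.univ.erase x) f
      (show y ∈ Finset.univ.erase x by simp [hxy.symm]),
    Finset.add_sum_erase Finset.univ f (Finset.mem_univ x)]

lemma step (u : Fin m → ℕ) (x y : Fin m) (hxy : x ≠ y) (hx : 2 ≤ u x) (hy : 1 ≤ u y) :
    Ideal.Quotient.mk (J m) (∏ z, X z ^ u z) =
      Ideal.Quotient.mk (J m)
        (∏ z, X z ^ (Function.update (Function.update u x (u x - 1)) y (u y + 1)) z) := by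
  rw [Ideal.Quotient.eq, CharTwo.sub_eq_add]
  set u' := Function.update (Function.update u x (u x - 1)) y (u y + 1) with hu'
  have hux : u' x = u x - 1 := by
    rw [hu', Function.update_of_ne hxy, Function.update_self]
  have huy : u' y = u y + 1 := by rw [hu', Function.update_self]
  have hrest : ∀ z ∈ (Finset.univ.erase x).erase y, u' z = u z := by
    intro z hz
    simp only [Finset.mem_erase] at hz
    rw [hu', Function.update_of_ne hz.1, Function.update_of_ne hz.2.1]
  rw [split_prod x y hxy, split_prod x y hxy]
  have hP : (∏ z ∈ (Finset.univ.erase x).erase y, X z ^ u' z)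
      = ∏ z ∈ (Finset.univ.erase x).erase y, (X z : MvPolynomial (Fin m) (ZMod 2)) ^ u z :=
    Finset.prod_congr rfl fun z hz => by rw [hrest z hz]
  rw [hP, hux, huy]
  set P := ∏ z ∈ (Finset.univ.erase x).erase y, (X z : MvPolynomial (Fin m) (ZMod 2)) ^ u z
  obtain ⟨a, ha⟩ : ∃ a, u x = a + 2 := ⟨u x - 2, by omega⟩
  obtain ⟨b, hb⟩ : ∃ b, u y = b + 1 := ⟨u y - 1, by omega⟩
  rw [ha, hb, show a + 2 - 1 = a + 1 from rfl]
  have key : (X x : MvPolynomial (Fin m) (ZMod 2)) ^ (a + 2) * X y ^ (b + 1) * P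
      + X x ^ (a + 1) * X y ^ (b + 1 + 1) * P
      = (X y ^ 2 * X x + X y * X x ^ 2) * (X x ^ a * X y ^ b * P) := by ring
  rw [key]
  exact Ideal.mul_mem_right _ _ (gen_mem y x)

lemma congrQ : ∀ (n : ℕ) (u v : Fin m → ℕ), (∑ z, ((u z - v z) + (v z - u z))) = n →
    (∀ z, u z = 0 ↔ v z = 0) → (∑ z, u z) = (∑ z, v z) →
    Ideal.Quotient.mk (J m) (∏ z, X z ^ u z) = Ideal.Quotient.mk (J m) (∏ z, X z ^ v z) := by
  intro n
  induction n using Nat.strong_induction_on with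
  | _ n IH =>
    intro u v hn hsupp hsum
    by_cases huv : ∀ z, u z = v z
    · exact congrArg _ (Finset.prod_congr rfl fun z _ => by rw [huv z])
    · push_neg at huv
      obtain ⟨z0, hz0⟩ := huv
      have hex : ∃ x, v x < u x := by
        by_contra hc; push_neg at hc
        exact hz0 ((Finset.sum_eq_sum_iff_of_le (fun z _ => hc z)).mp hsum z0 (Finset.mem_univ z0))
      have hey : ∃ y, u y < v y := by
        by_contra hc; push_neg at hc
        exact hz0 (((Finset.sum_eq_sum_iff_of_le (fun z _ => hc z)).mp hsum.symm z0
          (Finset.mem_univ z0)).symm)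
      obtain ⟨x, hx⟩ := hex
      obtain ⟨y, hy⟩ := hey
      have hxy : x ≠ y := by intro h; rw [h] at hx; omega
      have hvx : 1 ≤ v x := by
        have : v x ≠ 0 := fun h => by have := (hsupp x).mpr h; omega
        omega
      have hux2 : 2 ≤ u x := by omega
      have huy1 : 1 ≤ u y := by
        have : u y ≠ 0 := fun h => by have := (hsupp y).mp h; omega
        omega
      set u' := Function.update (Function.update u x (u x - 1)) y (u y + 1) with hu'
      have hux : u' x = u x - 1 := by
        rw [hu', Function.update_of_ne hxy, Function.update_self]
      have huy : u' y = u y + 1 := by rw [hu', Function.update_self]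
      have hrest : ∀ z, z ≠ x → z ≠ y → u' z = u z := by
        intro z hz1 hz2
        rw [hu', Function.update_of_ne hz2, Function.update_of_ne hz1]
      rw [step u x y hxy hux2 huy1, ← hu']
      have hrestsum : ∀ f g : Fin m → ℕ, (∀ z, z ≠ x → z ≠ y → f z = g z) →
          (∑ z ∈ (Finset.univ.erase x).erase y, f z)
            = ∑ z ∈ (Finset.univ.erase x).erase y, g z := by
        intro f g hfg
        exact Finset.sum_congr rfl fun z hz => by
          simp only [Finset.mem_erase] at hz
          exact hfg z hz.2.1 hz.1
      have hnew : (∑ z, ((u' z - v z) + (v z - u' z))) < n := by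
        rw [split_sum x y hxy] at hn ⊢
        rw [hrestsum _ _ (fun z h1 h2 => by rw [hrest z h1 h2])]
        rw [hux, huy]
        omega
      apply IH _ hnew u' v rfl
      · intro z
        by_cases h1 : z = x
        · subst h1; rw [hux]; constructor <;> intro h <;> omega
        · by_cases h2 : z = y
          · subst h2; rw [huy]; constructor <;> intro h <;> omega
          · rw [hrest z h1 h2]; exact hsupp z
      · rw [split_sum x y hxy u', split_sum x y hxy u] at *
        rw [hrestsum _ _ (fun z h1 h2 => by rw [hrest z h1 h2]), hux, huy]
        omega

/-- canonical exponent vector with support `K` and total degree `d`. -/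
def uvec (d : ℕ) (K : Finset (Fin m)) (z : Fin m) : ℕ :=
  if z ∈ K then (if ∀ y ∈ K, z ≤ y then d + 1 - K.card else 1) else 0

lemma uvec_spec (d : ℕ) (K : Finset (Fin m)) (hK : K.Nonempty) (hcard : K.card ≤ d) :
    (∑ z, uvec d K z) = d ∧ ∀ z, uvec d K z ≠ 0 ↔ z ∈ K := by
  have hc1 : 1 ≤ K.card := Finset.card_pos.mpr hK
  constructor
  · have h1 : (∑ z, uvec d K z)
        = ∑ z ∈ K, (if ∀ y ∈ K, z ≤ y then d + 1 - K.card else 1) := by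
      rw [show (∑ z, uvec d K z) = ∑ z ∈ Finset.univ,
        (if z ∈ K then (if ∀ y ∈ K, z ≤ y then d + 1 - K.card else 1) else 0) from rfl]
      rw [Finset.sum_ite_mem, Finset.univ_inter]
    rw [h1]
    have hmin : ∀ z ∈ K, ((∀ y ∈ K, z ≤ y) ↔ z = K.min' hK) := by
      intro z hz
      constructor
      · intro h; exact le_antisymm (h _ (K.min'_mem hK)) (K.min'_le z hz)
      · rintro rfl; exact fun y hy => K.min'_le y hy
    rw [Finset.sum_congr rfl (fun z hz => if_congr (hmin z hz) rfl rfl)]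
    rw [← Finset.add_sum_erase K _ (K.min'_mem hK), if_pos rfl]
    rw [Finset.sum_congr rfl (fun z hz => if_neg (Finset.mem_erase.mp hz).1)]
    rw [Finset.sum_const, Finset.card_erase_of_mem (K.min'_mem hK), smul_eq_mul, mul_one]
    omega
  · intro z
    unfold uvec
    by_cases hz : z ∈ K
    · simp only [hz, if_true, iff_true]
      split <;> omega
    · simp [hz]

lemma classEq (d : ℕ) (hd : 1 ≤ d) (u : Fin m → ℕ) (K : Finset (Fin m))
    (hsupp : ∀ z, u z ≠ 0 ↔ z ∈ K) (hsum : ∑ z, u z = d) :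
    Ideal.Quotient.mk (J m) (∏ z, X z ^ u z)
      = Ideal.Quotient.mk (J m) (∏ z, X z ^ uvec d K z) := by
  have hK : K.Nonempty := by
    have hex : ∃ z, u z ≠ 0 := by
      by_contra hc; push_neg at hc
      have : ∑ z, u z = 0 := Finset.sum_eq_zero (fun z _ => hc z)
      omega
    obtain ⟨z, hz⟩ := hex
    exact ⟨z, (hsupp z).mp hz⟩
  have hcard : K.card ≤ d := by
    have h1 : K.card = ∑ _z ∈ K, 1 := Finset.card_eq_sum_ones K
    have h2 : (∑ _z ∈ K, 1) ≤ ∑ z ∈ K, u z :=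
      Finset.sum_le_sum (fun z hz => by have := (hsupp z).mpr hz; omega)
    have h3 : (∑ z ∈ K, u z) ≤ ∑ z, u z :=
      Finset.sum_le_sum_of_subset (Finset.subset_univ K)
    omega
  obtain ⟨hsumv, hsuppv⟩ := uvec_spec d K hK hcard
  exact congrQ _ u (uvec d K) rfl
    (fun z => not_iff_not.mp ((hsupp z).trans (hsuppv z).symm))
    (hsum.trans hsumv.symm)

lemma prodsq (A B : Finset (Fin m)) :
    (∏ x ∈ A, (X x : MvPolynomial (Fin m) (ZMod 2))) * ∏ x ∈ B, X x
      = ∏ z, X z ^ ((if z ∈ A then 1 else 0) + (if z ∈ B then 1 else 0)) := by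
  have h : ∀ S : Finset (Fin m),
      (∏ x ∈ S, (X x : MvPolynomial (Fin m) (ZMod 2)))
        = ∏ z, X z ^ (if z ∈ S then 1 else 0) := by
    intro S
    rw [show (∏ z, (X z : MvPolynomial (Fin m) (ZMod 2)) ^ (if z ∈ S then 1 else 0))
        = ∏ z ∈ Finset.univ, (if z ∈ S then (X z : MvPolynomial (Fin m) (ZMod 2)) else 1) from
      Finset.prod_congr rfl fun z _ => by split <;> simp]
    rw [Finset.prod_ite_mem, Finset.univ_inter]
  rw [h A, h B, ← Finset.prod_mul_distrib]
  exact Finset.prod_congr rfl fun z _ => (pow_add _ _ _).symm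

lemma nsmul_parity (n : ℕ) (r : MvPolynomial (Fin m) (ZMod 2) ⧸ J m) :
    n • r = (n % 2) • r := by
  have h2 : ((2 : ℕ) : MvPolynomial (Fin m) (ZMod 2) ⧸ J m) = 0 := by
    have hb : ((2 : ℕ) : MvPolynomial (Fin m) (ZMod 2)) = 0 := by
      exact_mod_cast CharTwo.two_eq_zero (R := MvPolynomial (Fin m) (ZMod 2))
    rw [← map_natCast (Ideal.Quotient.mk (J m)) 2, hb, map_zero]
  have h2r : 2 • r = 0 := by
    rw [two_smul, ← two_mul, show (2 : MvPolynomial (Fin m) (ZMod 2) ⧸ J m)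
      = ((2 : ℕ) : MvPolynomial (Fin m) (ZMod 2) ⧸ J m) by norm_cast, h2, zero_mul]
  calc n • r = (2 * (n / 2) + n % 2) • r := by rw [Nat.div_add_mod]
    _ = (n / 2) • (2 • r) + (n % 2) • r := by
        rw [add_smul, mul_comm, mul_smul]
    _ = (n % 2) • r := by rw [h2r, smul_zero, zero_add]


lemma count (i j : ℕ) (K : Finset (Fin m)) :
    (∑ A ∈ Finset.powersetCard i (Finset.univ : Finset (Fin m)),
      ∑ B ∈ Finset.powersetCard j (Finset.univ : Finset (Fin m)),
        if A ∪ B = K then (1 : ℕ) else 0) % 2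
      = if K.card = i ||| j then 1 else 0 := by
  by_cases hbig : i + j < K.card
  · have h0 : (∑ A ∈ Finset.powersetCard i (Finset.univ : Finset (Fin m)),
        ∑ B ∈ Finset.powersetCard j (Finset.univ : Finset (Fin m)),
          if A ∪ B = K then (1 : ℕ) else 0) = 0 := by
      refine Finset.sum_eq_zero fun A hA => Finset.sum_eq_zero fun B hB => ?_
      rw [if_neg]
      intro hAB
      have h1 := Finset.card_union_le A B
      rw [hAB, (Finset.mem_powersetCard.mp hA).2, (Finset.mem_powersetCard.mp hB).2] at h1
      omega
    have hne : ¬ K.card = i ||| j := by have := lor_le_add i j; omega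
    rw [h0, if_neg hne]
  · push_neg at hbig
    have hinner : ∀ A ∈ Finset.powersetCard i (Finset.univ : Finset (Fin m)),
        (∑ B ∈ Finset.powersetCard j (Finset.univ : Finset (Fin m)),
          if A ∪ B = K then (1 : ℕ) else 0)
          = if A ⊆ K then i.choose (i + j - K.card) else 0 := by
      intro A hA
      have hAcard : A.card = i := (Finset.mem_powersetCard.mp hA).2
      have hb : (∑ B ∈ Finset.powersetCard j (Finset.univ : Finset (Fin m)),
          if A ∪ B = K then (1 : ℕ) else 0)
          = ((Finset.powersetCard j (Finset.univ : Finset (Fin m))).filter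
              (fun B => A ∪ B = K)).card := by
        rw [Finset.sum_boole, Nat.cast_id]
      rw [hb]
      by_cases hAK : A ⊆ K
      · rw [if_pos hAK]
        have hik : i ≤ K.card := by
          rw [← hAcard]; exact Finset.card_le_card hAK
        have hcard : ((Finset.powersetCard j (Finset.univ : Finset (Fin m))).filter
              (fun B => A ∪ B = K)).card
            = (Finset.powersetCard (i + j - K.card) A).card := by
          apply Finset.card_bij' (i := fun B _ => B ∩ A) (j := fun C _ => (K \ A) ∪ C)
          · intro B hB
            simp only [Finset.mem_filter, Finset.mem_powersetCard] at hB
            obtain ⟨⟨_, hBc⟩, hABK⟩ := hB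
            rw [Finset.mem_powersetCard]
            refine ⟨Finset.inter_subset_right, ?_⟩
            have h1 := Finset.card_union_add_card_inter A B
            rw [hABK, hAcard, hBc] at h1
            rw [Finset.inter_comm]
            omega
          · intro C hC
            rw [Finset.mem_powersetCard] at hC
            obtain ⟨hCA, hCc⟩ := hC
            simp only [Finset.mem_filter, Finset.mem_powersetCard]
            have hdisj : Disjoint (K \ A) C :=
              Finset.disjoint_of_subset_right hCA Finset.sdiff_disjoint
            refine ⟨⟨Finset.subset_univ _, ?_⟩, ?_⟩
            · rw [Finset.card_union_of_disjoint hdisj, Finset.card_sdiff_of_subset hAK, hAcard, hCc]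
              omega
            · have h1 : A ∪ (K \ A ∪ C) = (A ∪ C) ∪ (K \ A) := by
                ext z
                simp only [Finset.mem_union, Finset.mem_sdiff]
                tauto
              rw [h1, Finset.union_eq_left.mpr hCA, Finset.union_sdiff_of_subset hAK]
          · intro B hB
            simp only [Finset.mem_filter, Finset.mem_powersetCard] at hB
            obtain ⟨⟨_, _⟩, hABK⟩ := hB
            ext z
            simp only [Finset.mem_union, Finset.mem_sdiff, Finset.mem_inter]
            constructor
            · rintro (⟨hzK, hzA⟩ | ⟨hzB, _⟩)
              · rw [← hABK] at hzK
                rcases Finset.mem_union.mp hzK with h | h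
                · exact absurd h hzA
                · exact h
              · exact hzB
            · intro hzB
              by_cases hzA : z ∈ A
              · exact Or.inr ⟨hzB, hzA⟩
              · exact Or.inl ⟨by rw [← hABK]; exact Finset.mem_union_right _ hzB, hzA⟩
          · intro C hC
            rw [Finset.mem_powersetCard] at hC
            obtain ⟨hCA, _⟩ := hC
            ext z
            simp only [Finset.mem_inter, Finset.mem_union, Finset.mem_sdiff]
            constructor
            · rintro ⟨⟨_, hzA⟩ | hzC, hzA2⟩
              · exact absurd hzA2 hzA
              · exact hzC
            · intro hzC
              exact ⟨Or.inr hzC, hCA hzC⟩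
        rw [hcard, Finset.card_powersetCard, hAcard]
      · rw [if_neg hAK]
        rw [Finset.card_eq_zero, Finset.filter_eq_empty_iff]
        intro B _
        intro hABK
        exact hAK (by rw [← hABK]; exact Finset.subset_union_left)
    rw [Finset.sum_congr rfl hinner]
    have houter : (∑ A ∈ Finset.powersetCard i (Finset.univ : Finset (Fin m)),
        if A ⊆ K then i.choose (i + j - K.card) else 0)
        = K.card.choose i * i.choose (i + j - K.card) := by
      rw [← Finset.sum_filter]
      have hfe : (Finset.powersetCard i (Finset.univ : Finset (Fin m))).filter
          (fun A => A ⊆ K) = Finset.powersetCard i K := by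
        ext A
        simp only [Finset.mem_filter, Finset.mem_powersetCard]
        constructor
        · rintro ⟨⟨_, hc⟩, hs⟩; exact ⟨hs, hc⟩
        · rintro ⟨hs, hc⟩; exact ⟨⟨Finset.subset_univ _, hc⟩, hs⟩
      rw [hfe, Finset.sum_const, Finset.card_powersetCard, smul_eq_mul]
    rw [houter, Nat.mul_mod]
    have p1 := choose_parity K.card i
    have p2 := choose_parity i (i + j - K.card)
    have pm := bit_main (i := i) (j := j) (k := K.card) (s := i + j - K.card) (by omega)
    by_cases hk : K.card = i ||| j
    · rw [if_pos hk]
      obtain ⟨hc1, hc2⟩ := pm.mpr hk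
      rw [p1.mpr hc1, p2.mpr hc2]
    · rw [if_neg hk]
      have hnc : ¬((i ||| K.card = K.card) ∧ ((i + j - K.card) ||| i = i)) :=
        fun h => hk (pm.mp h)
      rcases Nat.mod_two_eq_zero_or_one (K.card.choose i) with h1 | h1
      · rw [h1]; simp
      · rcases Nat.mod_two_eq_zero_or_one (i.choose (i + j - K.card)) with h2 | h2
        · rw [h2]; simp
        · exact absurd ⟨p1.mp h1, p2.mp h2⟩ hnc

lemma regroup {M : Type*} [AddCommMonoid M] (i j : ℕ) (c : Finset (Fin m) → M) :
    (∑ A ∈ Finset.powersetCard i (Finset.univ : Finset (Fin m)),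
      ∑ B ∈ Finset.powersetCard j (Finset.univ : Finset (Fin m)), c (A ∪ B))
    = ∑ K : Finset (Fin m),
        (∑ A ∈ Finset.powersetCard i (Finset.univ : Finset (Fin m)),
          ∑ B ∈ Finset.powersetCard j (Finset.univ : Finset (Fin m)),
            if A ∪ B = K then (1 : ℕ) else 0) • c K := by
  have h1 : ∀ A B : Finset (Fin m),
      c (A ∪ B) = ∑ K : Finset (Fin m), if A ∪ B = K then c K else 0 := by
    intro A B
    rw [Finset.sum_ite_eq Finset.univ (A ∪ B) c, if_pos (Finset.mem_univ _)]
  calc (∑ A ∈ Finset.powersetCard i (Finset.univ : Finset (Fin m)),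
        ∑ B ∈ Finset.powersetCard j (Finset.univ : Finset (Fin m)), c (A ∪ B))
      = ∑ A ∈ Finset.powersetCard i (Finset.univ : Finset (Fin m)),
          ∑ B ∈ Finset.powersetCard j (Finset.univ : Finset (Fin m)),
            ∑ K : Finset (Fin m), if A ∪ B = K then c K else 0 :=
        Finset.sum_congr rfl fun A _ => Finset.sum_congr rfl fun B _ => h1 A B
    _ = ∑ A ∈ Finset.powersetCard i (Finset.univ : Finset (Fin m)),
          ∑ K : Finset (Fin m),
            ∑ B ∈ Finset.powersetCard j (Finset.univ : Finset (Fin m)),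
              if A ∪ B = K then c K else 0 :=
        Finset.sum_congr rfl fun A _ => Finset.sum_comm
    _ = ∑ K : Finset (Fin m),
          ∑ A ∈ Finset.powersetCard i (Finset.univ : Finset (Fin m)),
            ∑ B ∈ Finset.powersetCard j (Finset.univ : Finset (Fin m)),
              if A ∪ B = K then c K else 0 := Finset.sum_comm
    _ = ∑ K : Finset (Fin m),
        (∑ A ∈ Finset.powersetCard i (Finset.univ : Finset (Fin m)),
          ∑ B ∈ Finset.powersetCard j (Finset.univ : Finset (Fin m)),
            if A ∪ B = K then (1 : ℕ) else 0) • c K := by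
        refine Finset.sum_congr rfl fun K _ => ?_
        rw [Finset.sum_smul]
        refine Finset.sum_congr rfl fun A _ => ?_
        rw [Finset.sum_smul]
        refine Finset.sum_congr rfl fun B _ => ?_
        rw [ite_smul, one_smul, zero_smul]

end Stmt15Aux

/-- Let `e i, e j` be elementary symmetric polynomials in `F₂[t 1, …, t m]` with
`1 ≤ i, j ≤ m`.  For each subset `K` of `{1,…,m}` with `|K| = i ||| j` (bitwise or), choose an
arbitrary monomial of total degree `i + j` with support exactly `K` (given here by its
exponent vector `a K`).  Then `e i * e j - ∑_K ∏ x, t x ^ (a K x)` lies in the ideal `J m`,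
the sum ranging over the subsets `K` with `|K| = i ||| j`. -/
theorem stmt_15 (m : ℕ) (hm : 1 ≤ m) (i j : ℕ) (hi1 : 1 ≤ i) (him : i ≤ m)
    (hj1 : 1 ≤ j) (hjm : j ≤ m) (a : Finset (Fin m) → Fin m → ℕ)
    (ha : ∀ K : Finset (Fin m), K.card = i ||| j →
      (∑ x, a K x) = i + j ∧ ∀ x, (a K x ≠ 0 ↔ x ∈ K)) :
    esymm (Fin m) (ZMod 2) i * esymm (Fin m) (ZMod 2) j -
        ∑ K ∈ Finset.univ.filter (fun K : Finset (Fin m) => K.card = i ||| j),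
          ∏ x, X x ^ a K x ∈ J m := by
  rw [← Ideal.Quotient.eq]
  have hd : 1 ≤ i + j := by omega
  have hL : Ideal.Quotient.mk (J m) (esymm (Fin m) (ZMod 2) i * esymm (Fin m) (ZMod 2) j)
      = ∑ A ∈ Finset.powersetCard i (Finset.univ : Finset (Fin m)),
          ∑ B ∈ Finset.powersetCard j (Finset.univ : Finset (Fin m)),
            Ideal.Quotient.mk (J m) (∏ z, X z ^ Stmt15Aux.uvec (i + j) (A ∪ B) z) := by
    rw [show esymm (Fin m) (ZMod 2) i
        = ∑ A ∈ Finset.powersetCard i (Finset.univ : Finset (Fin m)), ∏ x ∈ A, X x from rfl]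
    rw [show esymm (Fin m) (ZMod 2) j
        = ∑ B ∈ Finset.powersetCard j (Finset.univ : Finset (Fin m)), ∏ x ∈ B, X x from rfl]
    rw [Finset.sum_mul_sum, map_sum]
    refine Finset.sum_congr rfl fun A hA => ?_
    rw [map_sum]
    refine Finset.sum_congr rfl fun B hB => ?_
    rw [Stmt15Aux.prodsq]
    refine Stmt15Aux.classEq (i + j) hd _ (A ∪ B) ?_ ?_
    · intro z
      by_cases hzA : z ∈ A <;> by_cases hzB : z ∈ B <;> simp [hzA, hzB]
    · rw [Finset.sum_add_distrib]
      have hs : ∀ S : Finset (Fin m), (∑ z, if z ∈ S then (1 : ℕ) else 0) = S.card := by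
        intro S
        rw [Finset.sum_ite_mem, Finset.univ_inter, ← Finset.card_eq_sum_ones]
      rw [hs A, hs B, (Finset.mem_powersetCard.mp hA).2, (Finset.mem_powersetCard.mp hB).2]
  rw [hL, Stmt15Aux.regroup i j
    (fun K => Ideal.Quotient.mk (J m) (∏ z, X z ^ Stmt15Aux.uvec (i + j) K z))]
  rw [map_sum]
  have hR : ∀ K ∈ Finset.univ.filter (fun K : Finset (Fin m) => K.card = i ||| j),
      Ideal.Quotient.mk (J m) (∏ x, X x ^ a K x)
        = Ideal.Quotient.mk (J m) (∏ z, X z ^ Stmt15Aux.uvec (i + j) K z) := by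
    intro K hK
    have hcard := (Finset.mem_filter.mp hK).2
    obtain ⟨hsum, hsupp⟩ := ha K hcard
    exact Stmt15Aux.classEq (i + j) hd _ K hsupp hsum
  rw [Finset.sum_congr rfl hR, Finset.sum_filter]
  refine Finset.sum_congr rfl fun K _ => ?_
  rw [Stmt15Aux.nsmul_parity, Stmt15Aux.count i j K]
  rw [ite_smul, one_smul, zero_smul]
end

section
/- Let m ≥ 1 and let n be an integer with 1 ≤ n ≤ m, with binary expansion n = Σ_{k ∈ B} 2^k where B is the set of binary digits of n equal to 1. Let e_d ∈ F_2[t_1,…,t_m] denote the d-th elementary symmetric polynomial in t_1,…,t_m. Then e_n − ∏_{k ∈ B} e_{2^k} belongs to the ideal J_m. (This is the universal relation w_n = ∏_k w_{2^k}^{a_k} modulo the canonical ideal, for the binary expansion n = Σ_k a_k 2^k.) -/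
open MvPolynomial

/-- Mod-2 Lucas: `n.choose k` is odd iff every bit of `k` is a bit of `n`. -/
lemma odd_choose_iff (n k : ℕ) :
    Odd (n.choose k) ↔ ∀ i, k.testBit i = true → n.testBit i = true := by
  induction n using Nat.strong_induction_on generalizing k with
  | _ n ih =>
  rcases Nat.eq_zero_or_pos n with rfl | hn
  · constructor
    · intro h i hi
      rcases Nat.eq_zero_or_pos k with rfl | hk
      · exact absurd hi (by simp [Nat.zero_testBit])
      · simp [Nat.choose_eq_zero_of_lt hk] at h
    · intro h
      have : k = 0 := Nat.eq_of_testBit_eq fun i => by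
        by_contra hne
        have : k.testBit i = true := by
          simpa [Nat.zero_testBit] using hne
        simpa [Nat.zero_testBit] using h i this
      simp [this]
  · have : Fact (Nat.Prime 2) := ⟨Nat.prime_two⟩
    have hl := @Choose.choose_modEq_choose_mod_mul_choose_div_nat n k 2 this
    have hodd : Odd (n.choose k) ↔
        Odd ((n % 2).choose (k % 2)) ∧ Odd ((n / 2).choose (k / 2)) := by
      rw [← Nat.odd_mul]
      unfold Nat.ModEq at hl
      rw [Nat.odd_iff, Nat.odd_iff]
      omega
    rw [hodd, ih (n / 2) (by omega) (k / 2)]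
    have hfirst : Odd ((n % 2).choose (k % 2)) ↔
        (k.testBit 0 = true → n.testBit 0 = true) := by
      have h1 : n % 2 = 0 ∨ n % 2 = 1 := Nat.mod_two_eq_zero_or_one n
      have h2 : k % 2 = 0 ∨ k % 2 = 1 := Nat.mod_two_eq_zero_or_one k
      rcases h1 with h1 | h1 <;> rcases h2 with h2 | h2 <;>
        simp [Nat.testBit_zero, h1, h2]
    rw [hfirst]
    constructor
    · rintro ⟨h0, hs⟩ i hi
      cases i with
      | zero => exact h0 hi
      | succ j =>
        rw [Nat.testBit_succ] at hi ⊢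
        exact hs j (by simpa [Nat.testBit_succ] using hi)
    · intro h
      refine ⟨h 0, fun j hj => ?_⟩
      rw [← Nat.testBit_succ] at hj ⊢
      exact h (j + 1) hj

lemma subset_le_of_testBit {c a : ℕ} (h : ∀ i, c.testBit i = true → a.testBit i = true) :
    c ≤ a := by
  have : c &&& a = c := Nat.eq_of_testBit_eq fun i => by
    rw [Nat.testBit_and]
    cases hc : c.testBit i
    · simp
    · simp [h i hc]
  calc c = c &&& a := this.symm
    _ ≤ a := Nat.and_le_right

/-- bits of `a + b` when `a` and `b` have disjoint bits -/
lemma testBit_add_disjoint : ∀ (i a b : ℕ),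
    (∀ j, ¬(a.testBit j = true ∧ b.testBit j = true)) →
    (a + b).testBit i = (a.testBit i || b.testBit i) := by
  intro i
  induction i with
  | zero =>
    intro a b h
    have h0 := h 0
    simp only [Nat.testBit_zero] at h0 ⊢
    rcases Nat.mod_two_eq_zero_or_one a with ha | ha <;>
      rcases Nat.mod_two_eq_zero_or_one b with hb | hb <;>
      simp [ha, hb, Nat.add_mod, *] at h0 ⊢
  | succ j ih =>
    intro a b h
    have hor : a % 2 = 0 ∨ b % 2 = 0 := by
      rcases Nat.mod_two_eq_zero_or_one a with ha | ha
      · exact Or.inl ha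
      · rcases Nat.mod_two_eq_zero_or_one b with hb | hb
        · exact Or.inr hb
        · exact absurd ⟨by simp [Nat.testBit_zero, ha], by simp [Nat.testBit_zero, hb]⟩ (h 0)
    have hd : (a + b) / 2 = a / 2 + b / 2 := by omega
    rw [Nat.testBit_succ, Nat.testBit_succ, Nat.testBit_succ, hd]
    exact ih (a / 2) (b / 2) fun j hj => by
      refine h (j + 1) ?_
      simpa [Nat.testBit_succ] using hj

/-- bits of `a - c` when the bits of `c` are a subset of the bits of `a` -/
lemma testBit_sub_subset : ∀ (i a c : ℕ),
    (∀ j, c.testBit j = true → a.testBit j = true) →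
    (a - c).testBit i = (a.testBit i && ! c.testBit i) := by
  intro i
  induction i with
  | zero =>
    intro a c h
    have hle : c % 2 ≤ a % 2 := by
      rcases Nat.mod_two_eq_zero_or_one c with hc | hc
      · omega
      · have := h 0 (by simp [Nat.testBit_zero, hc])
        simp only [Nat.testBit_zero, decide_eq_true_eq] at this
        omega
    have hca : c ≤ a := subset_le_of_testBit h
    simp only [Nat.testBit_zero]
    have : (a - c) % 2 = a % 2 - c % 2 := by omega
    rw [this]
    rcases Nat.mod_two_eq_zero_or_one a with ha | ha <;>
      rcases Nat.mod_two_eq_zero_or_one c with hc | hc <;>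
      simp [ha, hc] at hle ⊢
  | succ j ih =>
    intro a c h
    have hsub : ∀ j, (c / 2).testBit j = true → (a / 2).testBit j = true := by
      intro j hj
      rw [← Nat.testBit_succ] at hj ⊢
      exact h (j + 1) hj
    have hle2 : c / 2 ≤ a / 2 := subset_le_of_testBit hsub
    have hle : c % 2 ≤ a % 2 := by
      rcases Nat.mod_two_eq_zero_or_one c with hc | hc
      · omega
      · have := h 0 (by simp [Nat.testBit_zero, hc])
        simp only [Nat.testBit_zero, decide_eq_true_eq] at this
        omega
    have hca : c ≤ a := subset_le_of_testBit h
    have hd : (a - c) / 2 = a / 2 - c / 2 := by omega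
    rw [Nat.testBit_succ, Nat.testBit_succ, Nat.testBit_succ, hd]
    exact ih (a / 2) (c / 2) hsub

/-- With disjoint bits, the central binomial coefficient relation is odd. -/
lemma odd_choose_add {a b : ℕ} (h : ∀ j, ¬(a.testBit j = true ∧ b.testBit j = true)) :
    Odd ((a + b).choose a) := by
  rw [odd_choose_iff]
  intro i hi
  rw [testBit_add_disjoint i a b h, hi, Bool.true_or]

lemma even_choose_mul {a b c : ℕ}
    (h : ∀ j, ¬(a.testBit j = true ∧ b.testBit j = true))
    (hc1 : 1 ≤ c) (hc2 : c ≤ a + b) :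
    ¬ Odd ((a + b - c).choose a * a.choose c) := by
  rintro hodd
  rw [Nat.odd_mul] at hodd
  obtain ⟨h1, h2⟩ := hodd
  rw [odd_choose_iff] at h1 h2
  -- c's bits are a subset of a's bits
  have hca : c ≤ a := subset_le_of_testBit h2
  have hrw : a + b - c = (a - c) + b := by omega
  obtain ⟨i, hi⟩ : ∃ i, c.testBit i = true := by
    rcases Nat.exists_most_significant_bit (n := c) (by omega) with ⟨i, hi, _⟩
    exact ⟨i, hi⟩
  have hia : a.testBit i = true := h2 i hi
  have hid : (a + b - c).testBit i = true := h1 i hia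
  have hsub := fun j => testBit_sub_subset j a c h2
  have hdisj : ∀ j, ¬((a - c).testBit j = true ∧ b.testBit j = true) := by
    intro j hj
    rw [hsub j, Bool.and_eq_true] at hj
    exact h j ⟨hj.1.1, hj.2⟩
  rw [hrw, testBit_add_disjoint i (a - c) b hdisj, hsub i, hi] at hid
  simp only [Bool.not_true, Bool.and_false, Bool.false_or] at hid
  exact h i ⟨hia, hid⟩

open MvPolynomial

lemma gen_mem {m : ℕ} (i j : Fin m) : (X i ^ 2 * X j + X i * X j ^ 2 :
    MvPolynomial (Fin m) (ZMod 2)) ∈ J m :=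
  Ideal.subset_span ⟨i, j, rfl⟩

lemma swap_mem {m : ℕ} (N : ℕ) : ∀ f g : Fin m →₀ ℕ,
    (∑ x, ((f x - g x) + (g x - f x))) = N →
    (∀ x, f x = 0 ↔ g x = 0) → (∑ x, f x) = (∑ x, g x) →
    (monomial f 1 + monomial g 1 : MvPolynomial (Fin m) (ZMod 2)) ∈ J m := by
  induction N using Nat.strong_induction_on with
  | _ N ih =>
  intro f g hN hsupp hsum
  by_cases hfg : f = g
  · subst hfg
    rw [CharTwo.add_self_eq_zero]
    exact zero_mem _
  · have hex1 : ∃ i, g i < f i := by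
      by_contra hno
      push_neg at hno
      refine hfg (Finsupp.ext fun x => ?_)
      exact (Finset.sum_eq_sum_iff_of_le (fun i _ => hno i)).mp hsum x (Finset.mem_univ x)
    have hex2 : ∃ j, f j < g j := by
      by_contra hno
      push_neg at hno
      refine hfg (Finsupp.ext fun x => ?_)
      exact ((Finset.sum_eq_sum_iff_of_le (fun i _ => hno i)).mp hsum.symm x (Finset.mem_univ x)).symm
    obtain ⟨i, hi⟩ := hex1
    obtain ⟨j, hj⟩ := hex2
    have hij : i ≠ j := fun h => by rw [h] at hi; omega
    have hji : ¬ j = i := fun h => hij h.symm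
    have hgi : 1 ≤ g i := by
      rcases Nat.eq_zero_or_pos (g i) with h0 | h0
      · exact absurd ((hsupp i).mpr h0) (by omega)
      · exact h0
    have hfj : 1 ≤ f j := by
      rcases Nat.eq_zero_or_pos (f j) with h0 | h0
      · exact absurd ((hsupp j).mp h0) (by omega)
      · exact h0
    have hfi : 2 ≤ f i := by omega
    set f' : Fin m →₀ ℕ := f + Finsupp.single j 1 - Finsupp.single i 1 with hf'def
    have hf' : ∀ x, f' x = f x + (if j = x then 1 else 0) - (if i = x then 1 else 0) := by
      intro x
      rw [hf'def]
      simp [Finsupp.tsub_apply, Finsupp.add_apply, Finsupp.single_apply]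
    set h : Fin m →₀ ℕ := f - Finsupp.single i 2 - Finsupp.single j 1 with hhdef
    have hh : ∀ x, h x = f x - (if i = x then 2 else 0) - (if j = x then 1 else 0) := by
      intro x
      rw [hhdef]
      simp [Finsupp.tsub_apply, Finsupp.single_apply]
    have hfeq : (Finsupp.single i 2 + Finsupp.single j 1) + h = f := by
      ext x
      rcases eq_or_ne x i with rfl | hxi
      · simp only [Finsupp.add_apply, Finsupp.single_apply, hh]
        simp [hji] <;> omega
      · rcases eq_or_ne x j with rfl | hxj
        · simp only [Finsupp.add_apply, Finsupp.single_apply, hh]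
          simp [hij] <;> omega
        · simp only [Finsupp.add_apply, Finsupp.single_apply, hh]
          simp [Ne.symm hxi, Ne.symm hxj]
    have hfeq' : (Finsupp.single i 1 + Finsupp.single j 2) + h = f' := by
      ext x
      rcases eq_or_ne x i with rfl | hxi
      · simp only [Finsupp.add_apply, Finsupp.single_apply, hh, hf']
        simp [hji] <;> omega
      · rcases eq_or_ne x j with rfl | hxj
        · simp only [Finsupp.add_apply, Finsupp.single_apply, hh, hf']
          simp [hij] <;> omega
        · simp only [Finsupp.add_apply, Finsupp.single_apply, hh, hf']
          simp [Ne.symm hxi, Ne.symm hxj]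
    have hXi1 : (X i : MvPolynomial (Fin m) (ZMod 2)) = monomial (Finsupp.single i 1) 1 := by
      rw [← pow_one (X i : MvPolynomial (Fin m) (ZMod 2)), X_pow_eq_monomial]
    have hXj1 : (X j : MvPolynomial (Fin m) (ZMod 2)) = monomial (Finsupp.single j 1) 1 := by
      rw [← pow_one (X j : MvPolynomial (Fin m) (ZMod 2)), X_pow_eq_monomial]
    have key : (monomial f 1 + monomial f' 1 : MvPolynomial (Fin m) (ZMod 2))
        = (X i ^ 2 * X j + X i * X j ^ 2) * monomial h 1 := by
      rw [add_mul, X_pow_eq_monomial, X_pow_eq_monomial, hXi1, hXj1,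
        monomial_mul, monomial_mul, monomial_mul, monomial_mul]
      norm_num
      rw [hfeq, hfeq']
    have mem1 : (monomial f 1 + monomial f' 1 : MvPolynomial (Fin m) (ZMod 2)) ∈ J m := by
      rw [key]
      exact Ideal.mul_mem_right _ _ (gen_mem i j)
    have hsupp' : ∀ x, f' x = 0 ↔ g x = 0 := by
      intro x
      have hx := hsupp x
      rw [hf' x]
      rcases eq_or_ne x i with rfl | hxi
      · simp [hji] <;> omega
      · rcases eq_or_ne x j with rfl | hxj
        · simp [hij] <;> omega
        · simp [Ne.symm hxi, Ne.symm hxj] <;> omega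
    have hsum' : (∑ x, f' x) = ∑ x, g x := by
      rw [← hsum]
      have e1 : ∀ x : Fin m, f' x + (if i = x then 1 else 0) = f x + (if j = x then 1 else 0) := by
        intro x
        rw [hf' x]
        rcases eq_or_ne x i with rfl | hxi
        · simp [hji] <;> omega
        · rcases eq_or_ne x j with rfl | hxj
          · simp [hij] <;> omega
          · simp [Ne.symm hxi, Ne.symm hxj]
      have e2 : (∑ x, (f' x + if i = x then 1 else 0)) = ∑ x, (f x + if j = x then 1 else 0) :=
        Finset.sum_congr rfl fun x _ => e1 x
      simp only [Finset.sum_add_distrib, Finset.sum_ite_eq, Finset.mem_univ, if_true] at e2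
      omega
    have hNlt : (∑ x, ((f' x - g x) + (g x - f' x))) < N := by
      rw [← hN]
      have e1 : ∀ x : Fin m, ((f x - g x) + (g x - f x))
          = ((f' x - g x) + (g x - f' x)) + ((if i = x then 1 else 0) + (if j = x then 1 else 0)) := by
        intro x
        rw [hf' x]
        rcases eq_or_ne x i with rfl | hxi
        · simp [hji] <;> omega
        · rcases eq_or_ne x j with rfl | hxj
          · simp [hij] <;> omega
          · simp only [if_neg (Ne.symm hxi), if_neg (Ne.symm hxj)]
            omega
      have e2 := Finset.sum_congr rfl fun x (_ : x ∈ (Finset.univ : Finset (Fin m))) => e1 x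
      simp only [Finset.sum_add_distrib, Finset.sum_ite_eq, Finset.mem_univ, if_true] at e2
      rw [Finset.sum_add_distrib, Finset.sum_add_distrib]
      omega
    have mem2 := ih _ hNlt f' g rfl hsupp' hsum'
    have heq : (monomial f 1 + monomial g 1 : MvPolynomial (Fin m) (ZMod 2))
        = (monomial f 1 + monomial f' 1) + (monomial f' 1 + monomial g 1) := by
      have h2 := CharTwo.add_self_eq_zero (monomial f' 1 : MvPolynomial (Fin m) (ZMod 2))
      rw [show ((monomial f 1 + monomial f' 1) + (monomial f' 1 + monomial g 1) :
          MvPolynomial (Fin m) (ZMod 2))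
        = (monomial f 1 + monomial g 1) + (monomial f' 1 + monomial f' 1) by ring, h2, add_zero]
    rw [heq]
    exact add_mem mem1 mem2

lemma prod_X_eq {m : ℕ} (S : Finset (Fin m)) :
    (∏ i ∈ S, X i : MvPolynomial (Fin m) (ZMod 2))
      = monomial (∑ i ∈ S, Finsupp.single i 1) 1 := by
  induction S using Finset.cons_induction with
  | empty => simp
  | cons a s ha ih =>
    rw [Finset.prod_cons, Finset.sum_cons, ih,
      show (X a : MvPolynomial (Fin m) (ZMod 2)) = monomial (Finsupp.single a 1) 1 by
        rw [← pow_one (X a : MvPolynomial (Fin m) (ZMod 2)), X_pow_eq_monomial],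
      monomial_mul, one_mul]

lemma ind_apply {m : ℕ} (S : Finset (Fin m)) (x : Fin m) :
    (∑ i ∈ S, Finsupp.single i (1:ℕ)) x = if x ∈ S then 1 else 0 := by
  rw [Finset.sum_apply']
  simp [Finsupp.single_apply, Finset.sum_ite_eq]

lemma sum_ind {m : ℕ} (S : Finset (Fin m)) :
    (∑ x : Fin m, if x ∈ S then (1:ℕ) else 0) = S.card := by
  simp [Finset.sum_ite_mem]

noncomputable def pick {m : ℕ} (hm : 0 < m) (U : Finset (Fin m)) : Fin m :=
  if h : U.Nonempty then U.min' h else ⟨0, hm⟩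

lemma pick_mem {m : ℕ} (hm : 0 < m) {U : Finset (Fin m)} (h : U.Nonempty) :
    pick hm U ∈ U := by
  rw [pick, dif_pos h]
  exact U.min'_mem h

lemma fiber_card {m : ℕ} (a b : ℕ) (U : Finset (Fin m)) (hU : U.card ≤ a + b) :
    (((Finset.powersetCard a (Finset.univ : Finset (Fin m))) ×ˢ
       (Finset.powersetCard b (Finset.univ : Finset (Fin m)))).filter
         (fun p => p.1 ∪ p.2 = U)).card
      = U.card.choose a * a.choose (a + b - U.card) := by
  classical
  set F := ((Finset.powersetCard a (Finset.univ : Finset (Fin m))) ×ˢ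
       (Finset.powersetCard b (Finset.univ : Finset (Fin m)))).filter
         (fun p => p.1 ∪ p.2 = U) with hF
  have hmap : ∀ p ∈ F, p.1 ∈ Finset.powersetCard a U := by
    intro p hp
    simp only [hF, Finset.mem_filter, Finset.mem_product,
      Finset.mem_powersetCard_univ] at hp
    rw [Finset.mem_powersetCard]
    exact ⟨hp.2 ▸ Finset.subset_union_left, hp.1.1⟩
  rw [Finset.card_eq_sum_card_fiberwise hmap]
  have hconst : ∀ S ∈ Finset.powersetCard a U,
      (F.filter (fun p => p.1 = S)).card = a.choose (a + b - U.card) := by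
    intro S hS
    rw [Finset.mem_powersetCard] at hS
    obtain ⟨hSU, hSa⟩ := hS
    have haU : a ≤ U.card := hSa ▸ Finset.card_le_card hSU
    have hcard : (F.filter (fun p => p.1 = S)).card
        = (Finset.powersetCard (a + b - U.card) S).card := by
      refine Finset.card_bij' (fun p _ => p.2 ∩ S) (fun W _ => (S, (U \ S) ∪ W))
        ?_ ?_ ?_ ?_
      · -- forward maps into target
        intro p hp
        simp only [hF, Finset.mem_filter, Finset.mem_product,
          Finset.mem_powersetCard_univ] at hp
        obtain ⟨⟨⟨hSa', hTb⟩, hu⟩, hp1⟩ := hp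
        rw [Finset.mem_powersetCard]
        refine ⟨Finset.inter_subset_right, ?_⟩
        show (p.2 ∩ S).card = a + b - U.card
        have hTsd : p.2 \ S = U \ S := by
          rw [← hu, hp1]
          ext x
          simp only [Finset.mem_sdiff, Finset.mem_union]
          tauto
        have h1 := Finset.card_inter_add_card_sdiff p.2 S
        rw [hTsd, Finset.card_sdiff_of_subset hSU, hTb] at h1
        omega
      · -- backward maps into source
        intro W hW
        rw [Finset.mem_powersetCard] at hW
        obtain ⟨hWS, hWc⟩ := hW
        have hdisj : Disjoint (U \ S) W :=
          Finset.sdiff_disjoint.mono_right hWS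
        simp only [hF, Finset.mem_filter, Finset.mem_product,
          Finset.mem_powersetCard_univ]
        refine ⟨⟨⟨hSa, ?_⟩, ?_⟩, trivial⟩
        · rw [Finset.card_union_of_disjoint hdisj, Finset.card_sdiff_of_subset hSU, hWc, hSa]
          omega
        · rw [← Finset.union_assoc, Finset.union_sdiff_of_subset hSU,
            Finset.union_eq_left]
          exact hWS.trans hSU
      · -- left inverse
        intro p hp
        simp only [hF, Finset.mem_filter, Finset.mem_product,
          Finset.mem_powersetCard_univ] at hp
        obtain ⟨⟨⟨hSa', hTb⟩, hu⟩, hp1⟩ := hp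
        have hTsd : U \ S = p.2 \ S := by
          rw [← hu, hp1]
          ext x
          simp only [Finset.mem_sdiff, Finset.mem_union]
          tauto
        show (S, (U \ S) ∪ (p.2 ∩ S)) = p
        rw [hTsd, Finset.sdiff_union_inter, ← hp1]
      · -- right inverse
        intro W hW
        rw [Finset.mem_powersetCard] at hW
        obtain ⟨hWS, hWc⟩ := hW
        show ((U \ S) ∪ W) ∩ S = W
        ext x
        simp only [Finset.mem_inter, Finset.mem_union, Finset.mem_sdiff]
        constructor
        · rintro ⟨h1 | h1, h2⟩
          · exact absurd h2 h1.2
          · exact h1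
        · intro hx
          exact ⟨Or.inr hx, hWS hx⟩
    rw [hcard, Finset.card_powersetCard, hSa]
  rw [Finset.sum_congr rfl hconst, Finset.sum_const, Finset.card_powersetCard,
    smul_eq_mul]

set_option maxHeartbeats 2000000 in
lemma esymm_mul_mem {m : ℕ} (hm : 0 < m) (a b : ℕ) (ha : 1 ≤ a)
    (hdisj : ∀ j, ¬(a.testBit j = true ∧ b.testBit j = true)) :
    esymm (Fin m) (ZMod 2) a * esymm (Fin m) (ZMod 2) b
      + esymm (Fin m) (ZMod 2) (a + b) ∈ J m := by
  classical
  set Pa := Finset.powersetCard a (Finset.univ : Finset (Fin m)) with hPa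
  set Pb := Finset.powersetCard b (Finset.univ : Finset (Fin m)) with hPb
  set ι : Finset (Fin m) → (Fin m →₀ ℕ) := fun S => ∑ i ∈ S, Finsupp.single i 1 with hι
  set c : Finset (Fin m) → (Fin m →₀ ℕ) :=
    fun U => ι U + Finsupp.single (pick hm U) (a + b - U.card) with hc
  have expand : esymm (Fin m) (ZMod 2) a * esymm (Fin m) (ZMod 2) b
      = ∑ p ∈ Pa ×ˢ Pb, monomial (ι p.1 + ι p.2) 1 := by
    rw [esymm_eq_sum_monomial, esymm_eq_sum_monomial, Finset.sum_mul_sum,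
      ← Finset.sum_product']
    exact Finset.sum_congr rfl fun p _ => by rw [monomial_mul, one_mul]
  -- each term is congruent to the canonical monomial of its union
  have hmemJ : ∀ p ∈ Pa ×ˢ Pb,
      (monomial (ι p.1 + ι p.2) 1 + monomial (c (p.1 ∪ p.2)) 1 :
        MvPolynomial (Fin m) (ZMod 2)) ∈ J m := by
    rintro ⟨S, T⟩ hp
    rw [Finset.mem_product, Finset.mem_powersetCard_univ,
      Finset.mem_powersetCard_univ] at hp
    obtain ⟨hS', hT'⟩ := hp
    have hS : S.card = a := hS'
    have hT : T.card = b := hT'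
    have hSne : S.Nonempty := Finset.card_pos.mp (by omega)
    have hUne : (S ∪ T).Nonempty := hSne.mono Finset.subset_union_left
    have hpk : pick hm (S ∪ T) ∈ S ∪ T := pick_mem hm hUne
    have hcard : (S ∪ T).card ≤ a + b := by
      calc (S ∪ T).card ≤ S.card + T.card := Finset.card_union_le S T
        _ = a + b := by rw [hS, hT]
    have hval1 : ∀ x, (ι S + ι T) x
        = (if x ∈ S then 1 else 0) + (if x ∈ T then 1 else 0) := by
      intro x
      rw [Finsupp.add_apply, hι]
      rw [ind_apply, ind_apply]
    have hval2 : ∀ x, (c (S ∪ T)) x = (if x ∈ S ∪ T then 1 else 0)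
        + (if pick hm (S ∪ T) = x then a + b - (S ∪ T).card else 0) := by
      intro x
      rw [hc]
      simp only [Finsupp.add_apply, Finsupp.single_apply]
      rw [hι, ind_apply]
    apply swap_mem _ _ _ rfl
    · intro x
      rw [hval1 x, hval2 x]
      rcases eq_or_ne (pick hm (S ∪ T)) x with heq | hne
      · have hxU : x ∈ S ∪ T := heq ▸ hpk
        rw [if_pos hxU, if_pos heq]
        rcases Finset.mem_union.mp hxU with h1 | h1
        · rw [if_pos h1]; omega
        · rw [if_pos h1]
          rcases Finset.mem_union.mp hxU with h2 | h2 <;> omega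
      · rw [if_neg hne]
        by_cases hxU : x ∈ S ∪ T
        · rw [if_pos hxU]
          rcases Finset.mem_union.mp hxU with h1 | h1
          · rw [if_pos h1]; omega
          · rw [if_pos h1]; omega
        · rw [if_neg hxU, if_neg (fun h => hxU (Finset.mem_union_left _ h)),
            if_neg (fun h => hxU (Finset.mem_union_right _ h))]
    · have e1 : (∑ x, (ι S + ι T) x) = a + b := by
        rw [Finset.sum_congr rfl fun x (_ : x ∈ Finset.univ) => hval1 x,
          Finset.sum_add_distrib, sum_ind, sum_ind, hS, hT]
      have e2 : (∑ x, (c (S ∪ T)) x) = a + b := by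
        rw [Finset.sum_congr rfl fun x (_ : x ∈ Finset.univ) => hval2 x,
          Finset.sum_add_distrib, sum_ind]
        simp only [Finset.sum_ite_eq, Finset.mem_univ, if_true]
        omega
      rw [e1, e2]
  -- the canonical sum equals esymm (a+b)
  have hcansum : (∑ p ∈ Pa ×ˢ Pb, monomial (c (p.1 ∪ p.2)) 1 :
      MvPolynomial (Fin m) (ZMod 2)) = esymm (Fin m) (ZMod 2) (a + b) := by
    have hcomp := Finset.sum_comp (s := Pa ×ˢ Pb)
      (fun U => (monomial (c U) 1 : MvPolynomial (Fin m) (ZMod 2)))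
      (fun p => p.1 ∪ p.2)
    beta_reduce at hcomp
    rw [hcomp]
    have hsmul : ∀ U ∈ Finset.image (fun p : Finset (Fin m) × Finset (Fin m) =>
        p.1 ∪ p.2) (Pa ×ˢ Pb),
        (((Pa ×ˢ Pb).filter (fun p => p.1 ∪ p.2 = U)).card •
          (monomial (c U) 1 : MvPolynomial (Fin m) (ZMod 2)))
        = if U.card = a + b then monomial (ι U) 1 else 0 := by
      intro U hU
      have hUc : U.card ≤ a + b := by
        obtain ⟨p, hp, rfl⟩ := Finset.mem_image.mp hU
        rw [Finset.mem_product, Finset.mem_powersetCard_univ,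
          Finset.mem_powersetCard_univ] at hp
        calc (p.1 ∪ p.2).card ≤ p.1.card + p.2.card := Finset.card_union_le _ _
          _ = a + b := by rw [hp.1, hp.2]
      rw [fiber_card a b U hUc]
      by_cases hcase : U.card = a + b
      · rw [if_pos hcase]
        have hzero : a + b - U.card = 0 := by omega
        have hcU : c U = ι U := by
          rw [hc]
          simp [hzero]
        have hodd : Odd (U.card.choose a * a.choose (a + b - U.card)) := by
          rw [hzero, Nat.choose_zero_right, mul_one, hcase]
          exact odd_choose_add hdisj
        obtain ⟨k, (hk : _ = 2 * k + 1)⟩ := hodd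
        rw [hcU, hk, add_smul, one_smul, mul_comm 2 k, mul_smul, two_smul,
          CharTwo.add_self_eq_zero, smul_zero, zero_add]
      · rw [if_neg hcase]
        have heven : ¬ Odd (U.card.choose a * a.choose (a + b - U.card)) := by
          have h1 := even_choose_mul hdisj (c := a + b - U.card)
            (by omega) (by omega)
          intro h2
          refine h1 ?_
          have : a + b - (a + b - U.card) = U.card := by omega
          rw [this]
          exact h2
        rw [Nat.not_odd_iff_even] at heven
        obtain ⟨k, (hk : _ = k + k)⟩ := heven
        rw [hk, add_smul, CharTwo.add_self_eq_zero]
    rw [Finset.sum_congr rfl hsmul, ← Finset.sum_filter]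
    have hfilter : (Finset.image (fun p : Finset (Fin m) × Finset (Fin m) =>
        p.1 ∪ p.2) (Pa ×ˢ Pb)).filter (fun U => U.card = a + b)
        = Finset.powersetCard (a + b) (Finset.univ : Finset (Fin m)) := by
      ext U
      rw [Finset.mem_filter, Finset.mem_powersetCard_univ]
      constructor
      · rintro ⟨-, h⟩
        exact h
      · intro hUc
        refine ⟨Finset.mem_image.mpr ?_, hUc⟩
        obtain ⟨S, hSU, hSc⟩ := Finset.exists_subset_card_eq
          (show a ≤ U.card by omega)
        refine ⟨(S, U \ S), Finset.mem_product.mpr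
          ⟨Finset.mem_powersetCard_univ.mpr hSc,
           Finset.mem_powersetCard_univ.mpr ?_⟩,
          Finset.union_sdiff_of_subset hSU⟩
        rw [Finset.card_sdiff_of_subset hSU, hUc, hSc]
        omega
    rw [hfilter, esymm_eq_sum_monomial]
  have hsplit : esymm (Fin m) (ZMod 2) a * esymm (Fin m) (ZMod 2) b
      + esymm (Fin m) (ZMod 2) (a + b)
      = (∑ p ∈ Pa ×ˢ Pb, ((monomial (ι p.1 + ι p.2) 1 : MvPolynomial (Fin m) (ZMod 2))
          + monomial (c (p.1 ∪ p.2)) 1))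
        + ((∑ p ∈ Pa ×ˢ Pb, (monomial (c (p.1 ∪ p.2)) 1 : MvPolynomial (Fin m) (ZMod 2)))
          + esymm (Fin m) (ZMod 2) (a + b)) := by
    rw [expand, Finset.sum_add_distrib]
    have h2 := CharTwo.add_self_eq_zero
      (∑ p ∈ Pa ×ˢ Pb, (monomial (c (p.1 ∪ p.2)) 1 : MvPolynomial (Fin m) (ZMod 2)))
    linear_combination -h2
  rw [hsplit]
  refine add_mem (Ideal.sum_mem _ hmemJ) ?_
  rw [hcansum, CharTwo.add_self_eq_zero]
  exact zero_mem _

lemma testBit_le {x k : ℕ} (h : x.testBit k = true) : 2 ^ k ≤ x := by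
  by_contra hlt
  rw [Nat.testBit_eq_false_of_lt (by omega)] at h
  exact Bool.false_ne_true h

lemma main_aux (m : ℕ) (hm : 1 ≤ m) : ∀ n, 1 ≤ n → n ≤ m →
    esymm (Fin m) (ZMod 2) n -
        ∏ k ∈ (Finset.range (n + 1)).filter (fun k => n.testBit k),
          esymm (Fin m) (ZMod 2) (2 ^ k) ∈ J m := by
  intro n
  induction n using Nat.strong_induction_on with
  | _ n ih =>
  intro hn1 hnm
  by_cases hpow : ∃ k, n = 2 ^ k
  · obtain ⟨k, rfl⟩ := hpow
    have hfil : (Finset.range (2 ^ k + 1)).filter (fun j => (2 ^ k).testBit j) = {k} := by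
      ext j
      rw [Finset.mem_filter, Finset.mem_range, Finset.mem_singleton]
      constructor
      · rintro ⟨-, hj⟩
        by_contra hne
        rw [Nat.testBit_two_pow_of_ne (fun h => hne h.symm)] at hj
        exact Bool.false_ne_true hj
      · rintro rfl
        exact ⟨by have := Nat.lt_two_pow_self (n := j); omega, Nat.testBit_two_pow_self⟩
    rw [hfil, Finset.prod_singleton, sub_self]
    exact zero_mem _
  · obtain ⟨k0, hk0, hmax⟩ := Nat.exists_most_significant_bit (show n ≠ 0 by omega)
    set a := 2 ^ k0 with hadef
    set b := n - a with hbdef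
    have hale : a ≤ n := testBit_le hk0
    have hb1 : 1 ≤ b := by
      rcases Nat.eq_zero_or_pos b with h0 | h0
      · exact absurd ⟨k0, by omega⟩ hpow
      · exact h0
    have hbn : b < n := by
      have : 0 < a := Nat.two_pow_pos k0
      omega
    have hab : a + b = n := by omega
    have hasub : ∀ i, a.testBit i = true → n.testBit i = true := by
      intro i hi
      rcases eq_or_ne k0 i with rfl | hne
      · exact hk0
      · rw [hadef, Nat.testBit_two_pow_of_ne hne] at hi
        exact absurd hi Bool.false_ne_true
    have hbbit : ∀ j, b.testBit j = (n.testBit j && ! a.testBit j) := by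
      intro j
      rw [hbdef]
      exact testBit_sub_subset j n a hasub
    have hdisj : ∀ j, ¬(a.testBit j = true ∧ b.testBit j = true) := by
      rintro j ⟨h1, h2⟩
      rw [hbbit j, h1] at h2
      simp at h2
    -- decompose the bit set of n
    have hseteq : (Finset.range (n + 1)).filter (fun k => n.testBit k)
        = insert k0 ((Finset.range (n + 1)).filter (fun k => b.testBit k)) := by
      ext j
      rw [Finset.mem_insert, Finset.mem_filter, Finset.mem_filter, Finset.mem_range]
      constructor
      · rintro ⟨hjr, hj⟩
        rcases eq_or_ne j k0 with rfl | hne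
        · exact Or.inl rfl
        · refine Or.inr ⟨hjr, ?_⟩
          rw [hbbit j, hj, hadef, Nat.testBit_two_pow_of_ne (fun h => hne h.symm)]
          rfl
      · rintro (rfl | ⟨hjr, hj⟩)
        · have h3 := Nat.lt_two_pow_self (n := j)
          exact ⟨by omega, hk0⟩
        · rw [hbbit j] at hj
          exact ⟨hjr, (Bool.and_eq_true _ _).mp hj |>.1⟩
    have hk0not : k0 ∉ (Finset.range (n + 1)).filter (fun k => b.testBit k) := by
      rw [Finset.mem_filter]
      rintro ⟨-, hk⟩
      rw [hbbit k0, hk0] at hk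
      rw [hadef] at hk
      rw [Nat.testBit_two_pow_self] at hk
      simp at hk
    have hfilb : (Finset.range (n + 1)).filter (fun k => b.testBit k)
        = (Finset.range (b + 1)).filter (fun k => b.testBit k) := by
      ext j
      simp only [Finset.mem_filter, Finset.mem_range]
      constructor
      · rintro ⟨-, hj⟩
        have h2 := testBit_le hj
        have h3 := Nat.lt_two_pow_self (n := j)
        have h5 : j < b := lt_of_lt_of_le h3 h2
        exact ⟨by omega, hj⟩
      · rintro ⟨-, hj⟩
        have h2 := testBit_le hj
        have h3 := Nat.lt_two_pow_self (n := j)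
        have h5 : j < b := lt_of_lt_of_le h3 h2
        exact ⟨by omega, hj⟩
    rw [hseteq, Finset.prod_insert hk0not, hfilb]
    -- apply induction and the multiplication lemma
    have ihb := ih b hbn hb1 (by omega)
    rw [CharTwo.sub_eq_add] at ihb ⊢
    have lemB := esymm_mul_mem (show 0 < m by omega) a b
      (Nat.two_pow_pos k0) hdisj
    rw [hab] at lemB
    have hid : (esymm (Fin m) (ZMod 2) n + esymm (Fin m) (ZMod 2) (2 ^ k0) *
        ∏ k ∈ (Finset.range (b + 1)).filter (fun k => b.testBit k),
          esymm (Fin m) (ZMod 2) (2 ^ k) : MvPolynomial (Fin m) (ZMod 2))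
        = (esymm (Fin m) (ZMod 2) a * esymm (Fin m) (ZMod 2) b
            + esymm (Fin m) (ZMod 2) n)
          + esymm (Fin m) (ZMod 2) a * (esymm (Fin m) (ZMod 2) b +
            ∏ k ∈ (Finset.range (b + 1)).filter (fun k => b.testBit k),
              esymm (Fin m) (ZMod 2) (2 ^ k)) := by
      have h2 := CharTwo.add_self_eq_zero
        (esymm (Fin m) (ZMod 2) a * esymm (Fin m) (ZMod 2) b)
      rw [hadef]
      linear_combination -h2
    rw [hid]
    exact add_mem lemB (Ideal.mul_mem_left _ _ ihb)

/-- Let `1 ≤ n ≤ m` with binary expansion `n = ∑_{k ∈ B} 2 ^ k`, where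
`B = {k : n.testBit k}` is the set of binary digits of `n` equal to `1`.  Then
`e n - ∏_{k ∈ B} e (2 ^ k)` lies in the ideal `J m`, where `e d` denotes the `d`-th
elementary symmetric polynomial in `F₂[t 1, …, t m]`.  (This is the universal relation
`w n = ∏_k (w (2 ^ k)) ^ (a k)` modulo the canonical ideal, for `n = ∑_k a k * 2 ^ k`.) -/
theorem stmt_16 (m : ℕ) (hm : 1 ≤ m) (n : ℕ) (hn1 : 1 ≤ n) (hnm : n ≤ m) :
    esymm (Fin m) (ZMod 2) n -
        ∏ k ∈ (Finset.range (n + 1)).filter (fun k => n.testBit k),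
          esymm (Fin m) (ZMod 2) (2 ^ k) ∈ J m :=
  main_aux m hm n hn1 hnm
end

section
/- Let m ≥ 1, and let 2^{j_1},…,2^{j_s} and 2^{k_1},…,2^{k_t} be two finite lists of powers of 2, each at most m, such that the two lists have the same sum (2^{j_1}+⋯+2^{j_s} = 2^{k_1}+⋯+2^{k_t}) and the same underlying set of values ({2^{j_1},…,2^{j_s}} = {2^{k_1},…,2^{k_t}} as sets). Let e_d ∈ F_2[t_1,…,t_m] denote the d-th elementary symmetric polynomial in t_1,…,t_m. Then e_{2^{j_1}} ⋯ e_{2^{j_s}} − e_{2^{k_1}} ⋯ e_{2^{k_t}} belongs to the ideal J_m. (This is the universal relation (*) among Stiefel–Whitney classes of 2-power degree modulo the canonical ideal.) -/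
open MvPolynomial

lemma odd_choose_mod2 (n k : ℕ) :
    Odd (n.choose k) ↔ Odd ((n % 2).choose (k % 2)) ∧ Odd ((n / 2).choose (k / 2)) := by
  have h := @Choose.choose_modEq_choose_mod_mul_choose_div_nat n k 2 ⟨Nat.prime_two⟩
  rw [← Nat.odd_mul, Nat.odd_iff, Nat.odd_iff, Nat.ModEq] at *
  omega

lemma bits_split (k n : ℕ) :
    (∀ i, k.testBit i = true → n.testBit i = true) ↔
      ((k % 2 = 1 → n % 2 = 1) ∧ ∀ i, (k/2).testBit i = true → (n/2).testBit i = true) := by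
  constructor
  · intro h
    refine ⟨fun hk => ?_, fun i hi => ?_⟩
    · have := h 0 (by simp [Nat.testBit_zero, hk])
      simpa [Nat.testBit_zero] using this
    · have := h (i+1) (by simpa [Nat.testBit_add_one] using hi)
      simpa [Nat.testBit_add_one] using this
  · rintro ⟨h0, hs⟩ i hi
    cases i with
    | zero => simp only [Nat.testBit_zero, decide_eq_true_eq] at *; exact h0 hi
    | succ i =>
      simp only [Nat.testBit_add_one] at *
      exact hs i hi

lemma choose_odd_iff_subset : ∀ n k : ℕ, Odd (n.choose k) ↔
    (∀ i, k.testBit i = true → n.testBit i = true) := by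
  intro n
  induction n using Nat.strong_induction_on with
  | _ n ih =>
    intro k
    rcases Nat.eq_zero_or_pos n with rfl | hn
    · rcases Nat.eq_zero_or_pos k with rfl | hk0
      · simp
      · simp only [Nat.choose_eq_zero_of_lt hk0]
        constructor
        · intro h; exact absurd h (by simp [Nat.odd_iff])
        · intro h
          obtain ⟨i, hi⟩ := Nat.exists_testBit_of_ne_zero (Nat.pos_iff_ne_zero.mp hk0)
          have := h i hi; simp [Nat.zero_testBit] at this
    · rw [odd_choose_mod2, bits_split, ih (n/2) (by omega)]
      have h2 : Odd ((n % 2).choose (k % 2)) ↔ (k % 2 = 1 → n % 2 = 1) := by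
        have hn2 : n % 2 = 0 ∨ n % 2 = 1 := by omega
        have hk2 : k % 2 = 0 ∨ k % 2 = 1 := by omega
        rcases hn2 with h | h <;> rcases hk2 with h' | h' <;>
          simp [h, h', Nat.odd_iff]
      rw [h2]

lemma nocarry_split (a b : ℕ) :
    (∀ i, ¬(a.testBit i = true ∧ b.testBit i = true)) ↔
      (¬(a % 2 = 1 ∧ b % 2 = 1) ∧ ∀ i, ¬((a/2).testBit i = true ∧ (b/2).testBit i = true)) := by
  constructor
  · intro h
    refine ⟨fun ⟨ha, hb⟩ => h 0 ⟨by simp [Nat.testBit_zero, ha], by simp [Nat.testBit_zero, hb]⟩,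
      fun i ⟨ha, hb⟩ => h (i+1) ⟨by simpa [Nat.testBit_add_one] using ha,
        by simpa [Nat.testBit_add_one] using hb⟩⟩
  · rintro ⟨h0, hs⟩ i ⟨ha, hb⟩
    cases i with
    | zero =>
      simp only [Nat.testBit_zero, decide_eq_true_eq] at ha hb
      exact h0 ⟨ha, hb⟩
    | succ i =>
      simp only [Nat.testBit_add_one] at ha hb
      exact hs i ⟨ha, hb⟩

lemma choose_add_odd_iff : ∀ n a b : ℕ, n = a + b → (Odd ((a + b).choose a) ↔
    (∀ i, ¬(a.testBit i = true ∧ b.testBit i = true))) := by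
  intro n
  induction n using Nat.strong_induction_on with
  | _ n ih =>
    intro a b hn
    rcases Nat.eq_zero_or_pos n with rfl | hpos
    · have ha : a = 0 := by omega
      have hb : b = 0 := by omega
      subst ha; subst hb
      simp [Nat.zero_testBit]
    · rw [odd_choose_mod2, nocarry_split]
      have hmod : a % 2 = 0 ∨ a % 2 = 1 := by omega
      have hmod' : b % 2 = 0 ∨ b % 2 = 1 := by omega
      have hdiv : n / 2 < n := by omega
      rcases hmod with h | h <;> rcases hmod' with h' | h'
      · have he : (a+b) % 2 = 0 ∧ (a+b)/2 = a/2 + b/2 := by omega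
        rw [he.1, he.2, ih (n/2) (by omega) (a/2) (b/2) (by omega)]
        simp [h, h']
      · have he : (a+b) % 2 = 1 ∧ (a+b)/2 = a/2 + b/2 := by omega
        rw [he.1, he.2, ih (n/2) (by omega) (a/2) (b/2) (by omega)]
        simp [h, h', Nat.odd_iff]
      · have he : (a+b) % 2 = 1 ∧ (a+b)/2 = a/2 + b/2 := by omega
        rw [he.1, he.2, ih (n/2) (by omega) (a/2) (b/2) (by omega)]
        simp [h, h', Nat.odd_iff]
      · have he : (a+b) % 2 = 0 := by omega
        rw [he]
        simp only [h, h']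
        constructor
        · rintro ⟨h1, -⟩
          exact absurd h1 (by simp [Nat.odd_iff])
        · rintro ⟨h1, -⟩; simp at h1
      

lemma testBit_mid (e x : ℕ) (h0 : 0 < x) (h1 : x < 2^e) :
    ∃ a, x.testBit a = true ∧ (2^e - x).testBit a = true := by
  obtain ⟨a, y, hy, hxy⟩ := Nat.exists_eq_two_pow_mul_odd (n := x) (by omega)
  have hae : a < e := by
    by_contra hae
    have : 2^e ≤ 2^a := Nat.pow_le_pow_right (by norm_num) (by omega)
    have : 1 ≤ y := by rcases hy with ⟨c, hc⟩; omega
    nlinarith [Nat.one_le_two_pow (n := a)]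
  refine ⟨a, ?_, ?_⟩
  · rw [Nat.testBit_eq_decide_div_mod_eq, hxy, Nat.mul_div_cancel_left _ (Nat.two_pow_pos a)]
    rcases hy with ⟨c, hc⟩
    simp only [decide_eq_true_eq]
    omega
  · have hsplit : 2^e = 2^a * 2^(e-a) := by
      rw [← pow_add]; congr 1; omega
    have hylt : y < 2^(e-a) := by
      by_contra hge
      push_neg at hge
      have : 2^a * 2^(e-a) ≤ 2^a * y := Nat.mul_le_mul_left _ hge
      omega
    have hkey : 2^e - x = 2^a * (2^(e-a) - y) := by
      rw [hsplit, hxy, Nat.mul_sub]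
    rw [Nat.testBit_eq_decide_div_mod_eq, hkey,
      Nat.mul_div_cancel_left _ (Nat.two_pow_pos a)]
    have hea : 1 ≤ e - a := by omega
    have : 2^(e-a) % 2 = 0 := by
      have : (2:ℕ) ∣ 2^(e-a) := dvd_pow_self 2 (by omega)
      omega
    rcases hy with ⟨c, hc⟩
    simp only [decide_eq_true_eq]
    omega

lemma parity_main (e σ x : ℕ) (hx : x ≤ 2^e) :
    Odd ((σ + x).choose σ * σ.choose (2^e - x)) ↔
      (if σ.testBit e then x = 0 else x = 2^e) := by
  rw [Nat.odd_mul, choose_add_odd_iff (σ + x) σ x rfl, choose_odd_iff_subset]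
  have hbp : ∀ i, (2^e : ℕ).testBit i = true ↔ e = i := by
    intro i; rw [Nat.testBit_two_pow]; simp
  rcases Nat.eq_zero_or_pos x with rfl | hx0
  · have h1 : ∀ i, ¬(σ.testBit i = true ∧ Nat.testBit 0 i = true) := by
      intro i; rw [Nat.zero_testBit]; simp
    simp only [Nat.sub_zero]
    constructor
    · rintro ⟨-, h⟩
      have := h e ((hbp e).mpr rfl)
      simp [this]
    · intro h
      refine ⟨h1, fun i hi => ?_⟩
      rw [hbp i] at hi
      subst hi
      by_cases hb : σ.testBit e = true
      · exact hb
      · rw [if_neg hb] at h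
        have := Nat.one_le_two_pow (n := e)
        omega
  · rcases eq_or_lt_of_le hx with rfl | hxlt
    · simp only [Nat.sub_self, Nat.choose_zero_right]
      have h2 : ∀ i, Nat.testBit 0 i = true → σ.testBit i = true := by
        intro i hi; rw [Nat.zero_testBit] at hi; exact absurd hi (by simp)
      constructor
      · rintro ⟨hc, -⟩
        have := hc e
        by_cases hb : σ.testBit e = true
        · exact absurd ⟨hb, (hbp e).mpr rfl⟩ this
        · simp only [Bool.not_eq_true] at hb
          simp [hb]
      · intro h
        by_cases hb : σ.testBit e = true
        · rw [if_pos hb] at h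
          have := Nat.one_le_two_pow (n := e)
          omega
        · refine ⟨fun i => ?_, h2⟩
          rintro ⟨hσ, hp⟩
          rw [hbp i] at hp
          subst hp
          exact hb hσ
    · constructor
      · rintro ⟨h1, h2⟩
        exfalso
        obtain ⟨a, hxa, hpa⟩ := testBit_mid e x hx0 hxlt
        exact h1 a ⟨h2 a hpa, hxa⟩
      · intro h
        split at h <;> omega

lemma testBit_add_pow (σ c : ℕ) (h : σ.testBit c = false) (e : ℕ) :
    (σ + 2^c).testBit e = (σ.testBit e || decide (e = c)) := by
  have h2 : ∀ k : ℕ, (0:ℕ) < 2^k := fun k => Nat.two_pow_pos k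
  rcases lt_trichotomy e c with hec | heq | hec
  · have hc : (2:ℕ)^c = 2^e * 2^(c-e) := by rw [← pow_add]; congr 1; omega
    have hd : (σ + 2^c) / 2^e = σ / 2^e + 2^(c-e) := by
      rw [hc, Nat.add_mul_div_left _ _ (h2 e)]
    have hev : 2^(c-e) % 2 = 0 := by
      have : (2:ℕ) ∣ 2^(c-e) := dvd_pow_self 2 (by omega)
      omega
    have hne : decide (e = c) = false := by simp; omega
    rw [Nat.testBit_eq_decide_div_mod_eq, Nat.testBit_eq_decide_div_mod_eq, hd, hne, Bool.or_false]
    congr 1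
    simp only [eq_iff_iff, decide_eq_true_eq]
    omega
  · subst heq
    rw [Nat.testBit_eq_decide_div_mod_eq, Nat.add_div_right _ (h2 e)]
    rw [Nat.testBit_eq_decide_div_mod_eq] at h
    have h' : ¬ (σ / 2^e % 2 = 1) := by
      intro hh; rw [hh] at h; simp at h
    simp only [decide_true, Bool.or_true]
    simp only [decide_eq_true_eq]
    omega
  · have hsm : σ % 2^(c+1) < 2^c := by
      have hms := @Nat.mod_pow_succ σ 2 c
      rw [Nat.testBit_eq_decide_div_mod_eq] at h
      have h3 : σ / 2 ^ c % 2 = 0 := by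
        by_contra hh
        have : σ / 2^c % 2 = 1 := by omega
        rw [this] at h; simp at h
      rw [h3] at hms
      have := Nat.mod_lt σ (y := 2^c) (h2 c)
      omega
    have key2 : (σ + 2^c)/2^(c+1) = σ/2^(c+1) := by
      have h1 := Nat.div_add_mod σ (2^(c+1))
      have hp : (2:ℕ)^(c+1) = 2^c+2^c := by rw [pow_succ]; ring
      have h4 : σ % 2^(c+1) + 2^c < 2^(c+1) := by omega
      have h5 : σ + 2^c = 2^(c+1) * (σ/2^(c+1)) + (σ%2^(c+1) + 2^c) := by omega
      rw [h5, Nat.mul_add_div (h2 (c+1)), Nat.div_eq_of_lt h4, add_zero]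
    have hsplit : (2:ℕ)^e = 2^(c+1) * 2^(e-c-1) := by rw [← pow_add]; congr 1; omega
    have key : (σ + 2^c) / 2^e = σ / 2^e := by
      rw [hsplit, ← Nat.div_div_eq_div_mul, ← Nat.div_div_eq_div_mul, key2]
    rw [Nat.testBit_eq_decide_div_mod_eq, Nat.testBit_eq_decide_div_mod_eq, key]
    have hne : decide (e = c) = false := by simp; omega
    rw [hne, Bool.or_false]

lemma sum_powers_testBit (S : Finset ℕ) (hS : ∀ v ∈ S, ∃ c, v = 2^c) :
    ∀ e, ((S.sum id).testBit e = true) ↔ 2^e ∈ S := by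
  induction S using Finset.induction with
  | empty => intro e; simp [Nat.zero_testBit]
  | @insert v S hv ih =>
    intro e
    obtain ⟨c, rfl⟩ := hS v (Finset.mem_insert_self v S)
    have hS' : ∀ v ∈ S, ∃ c, v = 2^c := fun v hv' => hS v (Finset.mem_insert_of_mem hv')
    rw [Finset.sum_insert hv]
    have hbit : (S.sum id).testBit c = false := by
      have : ¬ ((S.sum id).testBit c = true) := by rw [ih hS' c]; exact hv
      simpa using this
    have hco : (2^c + S.sum id) = S.sum id + 2^c := by ring
    rw [id_eq, hco, testBit_add_pow _ c hbit e]
    simp only [Bool.or_eq_true, decide_eq_true_eq, Finset.mem_insert]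
    rw [ih hS' e]
    constructor
    · rintro (h | h)
      · right; exact h
      · left; rw [h]
    · rintro (h | h)
      · right; exact Nat.pow_right_injective (le_refl 2) h
      · left; exact h

open Finset in
lemma card_between {α : Type*} [DecidableEq α] (U L : Finset α) (hd : Disjoint L U) (p : ℕ)
    (hp : L.card ≤ p) :
    (((L ∪ U).powersetCard p).filter (fun A => L ⊆ A)).card = U.card.choose (p - L.card) := by
  rw [← Finset.card_powersetCard]
  apply Finset.card_nbij' (fun A => A \ L) (fun B => B ∪ L)
  · intro A hA
    simp only [Finset.mem_coe, Finset.mem_filter, Finset.mem_powersetCard] at hA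
    obtain ⟨⟨hsub, hcard⟩, hL⟩ := hA
    rw [Finset.mem_coe, Finset.mem_powersetCard]
    constructor
    · intro x hx
      simp only [Finset.mem_sdiff] at hx
      have := hsub hx.1
      simp only [Finset.mem_union] at this
      tauto
    · rw [Finset.card_sdiff_of_subset hL, hcard]
  · intro B hB
    rw [Finset.mem_coe, Finset.mem_powersetCard] at hB
    obtain ⟨hsub, hcard⟩ := hB
    simp only [Finset.mem_coe, Finset.mem_filter, Finset.mem_powersetCard]
    have hdisj : Disjoint B L := (hd.symm.mono_left hsub)
    refine ⟨⟨?_, ?_⟩, Finset.subset_union_right⟩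
    · intro x hx
      simp only [Finset.mem_union] at hx ⊢
      rcases hx with hx | hx
      · right; exact hsub hx
      · left; exact hx
    · rw [Finset.card_union_of_disjoint hdisj, hcard]
      omega
  · intro A hA
    simp only [Finset.mem_coe, Finset.mem_filter, Finset.mem_powersetCard] at hA
    exact Finset.sdiff_union_of_subset hA.2
  · intro B hB
    rw [Finset.mem_coe, Finset.mem_powersetCard] at hB
    have hdisj : Disjoint B L := (hd.symm.mono_left hB.1)
    exact Finset.union_sdiff_cancel_right hdisj

open Finset in
lemma count_eq {α : Type*} [DecidableEq α] [Fintype α] (W : Finset α) (p σ : ℕ)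
    (hw : W.card ≤ σ + p) :
    ((Finset.powersetCard p Finset.univ ×ˢ Finset.powersetCard σ (Finset.univ : Finset α)).filter
      (fun AU => AU.1 ∪ AU.2 = W)).card = W.card.choose σ * σ.choose (σ + p - W.card) := by
  rw [Finset.card_eq_sum_card_fiberwise (f := fun AU => AU.2) (t := Finset.powersetCard σ W) ?hmap]
  case hmap =>
    intro x hx
    simp only [Finset.mem_coe, Finset.mem_filter, Finset.mem_product, Finset.mem_powersetCard] at hx ⊢
    refine ⟨?_, hx.1.2.2⟩
    rw [← hx.2]
    exact Finset.subset_union_right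
  have hconst : ∀ U ∈ Finset.powersetCard σ W,
      ((Finset.filter (fun AU => AU.2 = U)
        ((Finset.powersetCard p Finset.univ ×ˢ Finset.powersetCard σ Finset.univ).filter
          (fun AU => AU.1 ∪ AU.2 = W)))).card = σ.choose (σ + p - W.card) := by
    intro U hU
    rw [Finset.mem_powersetCard] at hU
    obtain ⟨hUW, hUc⟩ := hU
    have hσw : σ ≤ W.card := hUc ▸ Finset.card_le_card hUW
    have hL : (W \ U).card = W.card - σ := by rw [Finset.card_sdiff_of_subset hUW, hUc]
    have key : ((W).powersetCard p |>.filter (fun A => W \ U ⊆ A)).card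
        = U.card.choose (p - (W \ U).card) := by
      have := card_between U (W \ U) Finset.sdiff_disjoint p (by omega)
      rwa [Finset.sdiff_union_of_subset hUW] at this
    rw [hL, hUc] at key
    have hbij : (Finset.filter (fun AU => AU.2 = U)
        ((Finset.powersetCard p Finset.univ ×ˢ Finset.powersetCard σ Finset.univ).filter
          (fun AU => AU.1 ∪ AU.2 = W))).card
        = ((W).powersetCard p |>.filter (fun A => W \ U ⊆ A)).card := by
      apply Finset.card_nbij' (fun AU => AU.1) (fun A => (A, U))
      · intro AU hAU
        simp only [Finset.mem_coe, Finset.mem_filter, Finset.mem_product, Finset.mem_powersetCard] at hAU ⊢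
        obtain ⟨⟨⟨⟨hA, hAc⟩, hU'⟩, hun⟩, h2⟩ := hAU
        refine ⟨⟨?_, hAc⟩, ?_⟩
        · rw [← hun]; exact Finset.subset_union_left
        · intro x hx
          simp only [Finset.mem_sdiff] at hx
          have hxW := hx.1
          rw [← hun, Finset.mem_union] at hxW
          rcases hxW with h | h
          · exact h
          · rw [h2] at h; exact absurd h hx.2
      · intro A hA
        simp only [Finset.mem_coe, Finset.mem_filter, Finset.mem_powersetCard, Finset.mem_product] at hA ⊢
        obtain ⟨⟨hAW, hAc⟩, hsub⟩ := hA
        refine ⟨⟨⟨⟨Finset.subset_univ _, hAc⟩, ⟨Finset.subset_univ _, hUc⟩⟩, ?_⟩, trivial⟩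
        apply Finset.Subset.antisymm
        · exact Finset.union_subset hAW hUW
        · intro x hx
          by_cases hxU : x ∈ U
          · exact Finset.mem_union_right _ hxU
          · exact Finset.mem_union_left _ (hsub (Finset.mem_sdiff.mpr ⟨hx, hxU⟩))
      · intro AU hAU
        simp only [Finset.mem_coe, Finset.mem_filter] at hAU
        rw [← hAU.2]
      · intro A hA
        rfl
    rw [hbij, key]
    congr 1
    omega
  rw [Finset.sum_congr rfl hconst, Finset.sum_const, Finset.card_powersetCard, smul_eq_mul]

open Finset in
lemma count_zero {α : Type*} [DecidableEq α] [Fintype α] (W : Finset α) (p σ : ℕ)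
    (hw : σ + p < W.card) :
    ((Finset.powersetCard p Finset.univ ×ˢ Finset.powersetCard σ (Finset.univ : Finset α)).filter
      (fun AU => AU.1 ∪ AU.2 = W)).card = 0 := by
  rw [Finset.card_eq_zero, Finset.filter_eq_empty_iff]
  intro x hx
  rw [Finset.mem_product] at hx
  rw [Finset.mem_powersetCard] at hx
  intro hun
  have h1 : (x.1 ∪ x.2).card ≤ x.1.card + x.2.card := Finset.card_union_le x.1 x.2
  rw [hun, hx.1.2] at h1
  have h2 := (Finset.mem_powersetCard.mp hx.2).2
  omega

namespace Aux17
variable {m : ℕ}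

def deg (d : Fin m →₀ ℕ) : ℕ := ∑ x : Fin m, d x

lemma deg_add (a b : Fin m →₀ ℕ) : deg (a + b) = deg a + deg b := by
  simp [deg, Finset.sum_add_distrib]

lemma deg_single (i : Fin m) (n : ℕ) : deg (Finsupp.single i n) = n := by
  simp [deg, Finsupp.single_apply]

noncomputable def ind (U : Finset (Fin m)) : Fin m →₀ ℕ := ∑ i ∈ U, Finsupp.single i 1

lemma ind_apply (U : Finset (Fin m)) (x : Fin m) : ind U x = if x ∈ U then 1 else 0 := by
  classical
  rw [ind, Finset.sum_apply']
  simp only [Finsupp.single_apply]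
  rw [Finset.sum_ite_eq']

lemma ind_support (U : Finset (Fin m)) : (ind U).support = U := by
  ext x
  simp [Finsupp.mem_support_iff, ind_apply]

lemma deg_ind (U : Finset (Fin m)) : deg (ind U) = U.card := by
  simp [deg, ind_apply]


noncomputable def cExp (U : Finset (Fin m)) (N : ℕ) : Fin m →₀ ℕ :=
  if h : U.Nonempty then ind U + Finsupp.single (U.min' h) (N - U.card) else 0

lemma cExp_empty (N : ℕ) : (cExp (∅ : Finset (Fin m)) N) = 0 := by
  rw [cExp, dif_neg]
  simp

lemma cExp_apply (U : Finset (Fin m)) (N : ℕ) (h : U.Nonempty) (x : Fin m) :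
    cExp U N x = (if x ∈ U then 1 else 0) + (if U.min' h = x then N - U.card else 0) := by
  rw [cExp, dif_pos h, Finsupp.add_apply, ind_apply, Finsupp.single_apply]

lemma cExp_support (U : Finset (Fin m)) (N : ℕ) : (cExp U N).support = U := by
  by_cases h : U.Nonempty
  · ext x
    rw [Finsupp.mem_support_iff, cExp_apply U N h]
    constructor
    · intro hx
      by_contra hxU
      have h1 : (if x ∈ U then (1:ℕ) else 0) = 0 := by simp [hxU]
      have h2 : U.min' h ≠ x := fun he => hxU (he ▸ U.min'_mem h)
      rw [h1, if_neg h2] at hx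
      exact hx rfl
    · intro hx
      rw [if_pos hx]
      omega
  · rw [Finset.not_nonempty_iff_eq_empty] at h
    subst h
    rw [cExp_empty]
    simp

lemma deg_cExp (U : Finset (Fin m)) (N : ℕ) (h : U.Nonempty) (hN : U.card ≤ N) :
    deg (cExp U N) = N := by
  rw [cExp, dif_pos h, deg_add, deg_ind, deg_single]
  omega

lemma gen_mem (i j : Fin m) :
    (X i ^ 2 * X j + X i * X j ^ 2 : MvPolynomial (Fin m) (ZMod 2)) ∈ J m :=
  Ideal.subset_span ⟨i, j, rfl⟩

lemma mono_decomp (e a : Fin m →₀ ℕ) :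
    (monomial (e + a) (1 : ZMod 2)) = monomial e 1 * monomial a 1 := by
  rw [monomial_mul, one_mul]

lemma swap_step (e : Fin m →₀ ℕ) (i i0 : Fin m) :
    Ideal.Quotient.mk (J m) (monomial (e + Finsupp.single i 2 + Finsupp.single i0 1) 1)
      = Ideal.Quotient.mk (J m) (monomial (e + Finsupp.single i 1 + Finsupp.single i0 2) 1) := by
  rw [Ideal.Quotient.eq]
  have key : ∀ a b : ℕ, (monomial (e + Finsupp.single i a + Finsupp.single i0 b) (1 : ZMod 2))
      = monomial e 1 * (X i ^ a * X i0 ^ b) := by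
    intro a b
    rw [X_pow_eq_monomial, X_pow_eq_monomial, monomial_mul, monomial_mul, one_mul, one_mul,
      add_assoc]
  have h2 : (X i0 : MvPolynomial (Fin m) (ZMod 2)) = X i0 ^ 1 := (pow_one _).symm
  have hsub : (monomial (e + Finsupp.single i 2 + Finsupp.single i0 1) (1 : ZMod 2))
      - monomial (e + Finsupp.single i 1 + Finsupp.single i0 2) 1
      = monomial e 1 * (X i ^ 2 * X i0 + X i * X i0 ^ 2) := by
    rw [key, key, CharTwo.sub_eq_add, mul_add, pow_one, pow_one]
  rw [hsub]
  exact Ideal.mul_mem_left _ _ (gen_mem i i0)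


lemma deg_eq_support_sum (d : Fin m →₀ ℕ) : deg d = ∑ x ∈ d.support, d x := by
  rw [deg]
  apply (Finset.sum_subset (Finset.subset_univ _) _).symm
  intro x _ hx
  rw [Finsupp.notMem_support_iff] at hx
  exact hx

lemma empty_case (d : Fin m →₀ ℕ) (hne : ¬ d.support.Nonempty) :
    d = cExp d.support (deg d) := by
  rw [Finset.not_nonempty_iff_eq_empty] at hne
  rw [hne, cExp_empty]
  exact (Finsupp.support_eq_empty.mp hne)

lemma sum_facts (d : Fin m →₀ ℕ) (hne : d.support.Nonempty)
    (hc : ∀ i ∈ d.support, i ≠ d.support.min' hne → d i = 1) :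
    d (d.support.min' hne) + (d.support.card - 1) = deg d := by
  have hmem : d.support.min' hne ∈ d.support := d.support.min'_mem hne
  have h1 : d (d.support.min' hne) + ∑ x ∈ d.support.erase (d.support.min' hne), d x
      = ∑ x ∈ d.support, d x := Finset.add_sum_erase _ _ hmem
  have h2 : ∑ x ∈ d.support.erase (d.support.min' hne), d x
      = (d.support.erase (d.support.min' hne)).card := by
    rw [Finset.sum_congr rfl (fun x hx => ?_), Finset.sum_const, smul_eq_mul, mul_one]
    exact hc x (Finset.mem_of_mem_erase hx) (Finset.ne_of_mem_erase hx)
  rw [h2, Finset.card_erase_of_mem hmem] at h1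
  rw [deg_eq_support_sum]
  have hcard : 1 ≤ d.support.card := Finset.card_pos.mpr hne
  omega

lemma direct_case (d : Fin m →₀ ℕ) (hne : d.support.Nonempty)
    (hc : ∀ i ∈ d.support, i ≠ d.support.min' hne → d i = 1) :
    d = cExp d.support (deg d) := by
  have hmem : d.support.min' hne ∈ d.support := d.support.min'_mem hne
  have hsum := sum_facts d hne hc
  have hpos : d (d.support.min' hne) ≠ 0 := Finsupp.mem_support_iff.mp hmem
  have hcard : 1 ≤ d.support.card := Finset.card_pos.mpr hne
  ext x
  rw [cExp_apply _ _ hne]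
  by_cases hx : x ∈ d.support
  · rw [if_pos hx]
    by_cases hxi : d.support.min' hne = x
    · rw [if_pos hxi, ← hxi]
      omega
    · rw [if_neg hxi, hc x hx (fun h => hxi h.symm)]
  · have h0 : d x = 0 := Finsupp.notMem_support_iff.mp hx
    rw [if_neg hx, if_neg (fun h => hx (by rw [← h]; exact hmem)), h0]

lemma measure_lb (d : Fin m →₀ ℕ) (hne : d.support.Nonempty) (i : Fin m)
    (hi : i ∈ d.support) (hii0 : i ≠ d.support.min' hne) :
    d (d.support.min' hne) + d i ≤ deg d := by
  have hmem : d.support.min' hne ∈ d.support := d.support.min'_mem hne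
  have h1 : d (d.support.min' hne) + ∑ x ∈ d.support.erase (d.support.min' hne), d x
      = ∑ x ∈ d.support, d x := Finset.add_sum_erase _ _ hmem
  have h2 : d i ≤ ∑ x ∈ d.support.erase (d.support.min' hne), d x :=
    Finset.single_le_sum (fun _ _ => Nat.zero_le _) (Finset.mem_erase.mpr ⟨hii0, hi⟩)
  rw [deg_eq_support_sum]
  omega

lemma q_mono_nf : ∀ (n : ℕ) (d : Fin m →₀ ℕ),
    (∀ h : d.support.Nonempty, deg d - d (d.support.min' h) ≤ n) →
    Ideal.Quotient.mk (J m) (monomial d 1)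
      = Ideal.Quotient.mk (J m) (monomial (cExp d.support (deg d)) 1) := by
  intro n
  induction n with
  | zero =>
    intro d hmeas
    by_cases hne : d.support.Nonempty
    · by_cases hc : ∀ i ∈ d.support, i ≠ d.support.min' hne → d i = 1
      · rw [← direct_case d hne hc]
      · exfalso
        push_neg at hc
        obtain ⟨i, hi, hii0, hdi⟩ := hc
        have h2 : 2 ≤ d i := by
          have := Finsupp.mem_support_iff.mp hi
          omega
        have h3 := measure_lb d hne i hi hii0
        have h4 := hmeas hne
        omega
    · rw [← empty_case d hne]
  | succ n ih =>
    intro d hmeas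
    by_cases hne : d.support.Nonempty
    · by_cases hc : ∀ i ∈ d.support, i ≠ d.support.min' hne → d i = 1
      · rw [← direct_case d hne hc]
      · push_neg at hc
        obtain ⟨i, hi, hii0, hdi⟩ := hc
        have hmem : d.support.min' hne ∈ d.support := d.support.min'_mem hne
        have h2 : 2 ≤ d i := by
          have := Finsupp.mem_support_iff.mp hi
          omega
        have hpos : 1 ≤ d (d.support.min' hne) := by
          have := Finsupp.mem_support_iff.mp hmem
          omega
        have hne' : d.support.min' hne ≠ i := fun h => hii0 h.symm
        have hev : ∀ x, ((d - Finsupp.single i 2 - Finsupp.single (d.support.min' hne) 1 : Fin m →₀ ℕ)) x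
            = d x - (if i = x then 2 else 0) - (if d.support.min' hne = x then 1 else 0) := by
          intro x
          rw [Finsupp.tsub_apply, Finsupp.tsub_apply, Finsupp.single_apply,
            Finsupp.single_apply]
        have hd : d = (d - Finsupp.single i 2 - Finsupp.single (d.support.min' hne) 1)
            + Finsupp.single i 2 + Finsupp.single (d.support.min' hne) 1 := by
          ext x
          rw [Finsupp.add_apply, Finsupp.add_apply, hev x, Finsupp.single_apply,
            Finsupp.single_apply]
          by_cases hxi : i = x
          · rw [if_pos hxi, if_neg (hxi ▸ hne')]
            rw [← hxi]
            omega
          · by_cases hxi0 : d.support.min' hne = x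
            · rw [if_neg hxi, if_pos hxi0, ← hxi0]
              omega
            · rw [if_neg hxi, if_neg hxi0]
              omega
        set d' : Fin m →₀ ℕ := (d - Finsupp.single i 2 - Finsupp.single (d.support.min' hne) 1)
            + Finsupp.single i 1 + Finsupp.single (d.support.min' hne) 2 with hd'
        have hd'v : ∀ x, d' x = d x - (if i = x then 1 else 0)
            + (if d.support.min' hne = x then 1 else 0) := by
          intro x
          rw [hd', Finsupp.add_apply, Finsupp.add_apply, hev x, Finsupp.single_apply,
            Finsupp.single_apply]
          by_cases hxi : i = x
          · rw [if_pos hxi, if_pos hxi, if_neg (hxi ▸ hne'), if_neg (hxi ▸ hne'), ← hxi]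
            omega
          · by_cases hxi0 : d.support.min' hne = x
            · rw [if_neg hxi, if_neg hxi, if_pos hxi0, if_pos hxi0, ← hxi0]
              omega
            · rw [if_neg hxi, if_neg hxi, if_neg hxi0, if_neg hxi0]
              omega
        have hsupp : d'.support = d.support := by
          ext x
          rw [Finsupp.mem_support_iff, Finsupp.mem_support_iff, hd'v x]
          by_cases hxi : i = x
          · rw [if_pos hxi, if_neg (hxi ▸ hne'), ← hxi]
            omega
          · by_cases hxi0 : d.support.min' hne = x
            · rw [if_neg hxi, if_pos hxi0, ← hxi0]
              omega
            · rw [if_neg hxi, if_neg hxi0]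
              omega
        have hdeg : deg d' = deg d := by
          have h5 : deg d' = ∑ x : Fin m, d' x := rfl
          have h6 : deg d = ∑ x : Fin m, d x := rfl
          rw [h5, h6]
          have hsplit : ∀ x : Fin m, x ∈ Finset.univ → d' x + (if i = x then 1 else 0)
              = d x + (if d.support.min' hne = x then 1 else 0) := by
            intro x _
            rw [hd'v x]
            by_cases hxi : i = x
            · rw [if_pos hxi, ← hxi]
              omega
            · rw [if_neg hxi]
              omega
          have := Finset.sum_congr rfl hsplit
          rw [Finset.sum_add_distrib, Finset.sum_add_distrib] at this
          have hi1 : ∑ x : Fin m, (if i = x then (1:ℕ) else 0) = 1 := by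
            rw [Finset.sum_ite_eq]
            simp
          have hi2 : ∑ x : Fin m, (if d.support.min' hne = x then (1:ℕ) else 0) = 1 := by
            rw [Finset.sum_ite_eq]
            simp
          rw [hi1, hi2] at this
          omega
        have hswap : Ideal.Quotient.mk (J m) (monomial d 1)
            = Ideal.Quotient.mk (J m) (monomial d' 1) := by
          conv_lhs => rw [hd]
          rw [hd']
          exact swap_step _ i (d.support.min' hne)
        rw [hswap, ih d' ?hm, hsupp, hdeg]
        case hm =>
          intro h'
          have hmin : d'.support.min' h' = d.support.min' hne := by
            congr 1
          have hval : d' (d.support.min' hne) = d (d.support.min' hne) + 1 := by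
            rw [hd'v, if_neg hii0, if_pos rfl]
            omega
          have h4 := hmeas hne
          rw [hmin, hdeg, hval]
          omega
    · rw [← empty_case d hne]


lemma q_mono_eq (d : Fin m →₀ ℕ) :
    Ideal.Quotient.mk (J m) (monomial d 1)
      = Ideal.Quotient.mk (J m) (monomial (cExp d.support (deg d)) 1) := by
  apply q_mono_nf (deg d) d
  intro _
  omega

lemma support_add_nat (a b : Fin m →₀ ℕ) : (a + b).support = a.support ∪ b.support := by
  ext x
  rw [Finsupp.mem_support_iff, Finset.mem_union, Finsupp.mem_support_iff,
    Finsupp.mem_support_iff, Finsupp.add_apply]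
  omega

lemma q_mul_mono (a b : Fin m →₀ ℕ) :
    Ideal.Quotient.mk (J m) (monomial a (1 : ZMod 2) * monomial b 1)
      = Ideal.Quotient.mk (J m) (monomial (cExp (a.support ∪ b.support) (deg a + deg b)) 1) := by
  rw [monomial_mul, one_mul, q_mono_eq, support_add_nat, deg_add]

noncomputable def E (m σ N : ℕ) : MvPolynomial (Fin m) (ZMod 2) :=
  ∑ U ∈ Finset.powersetCard σ Finset.univ, monomial (cExp U N) 1

lemma E_self (σ : ℕ) : E m σ σ = esymm (Fin m) (ZMod 2) σ := by
  rw [E, esymm_eq_sum_monomial]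
  apply Finset.sum_congr rfl
  intro U hU
  rw [Finset.mem_powersetCard] at hU
  congr 1
  rw [cExp]
  by_cases h : U.Nonempty
  · rw [dif_pos h, hU.2, Nat.sub_self, Finsupp.single_zero, add_zero, ind]
  · rw [dif_neg h]
    rw [Finset.not_nonempty_iff_eq_empty] at h
    subst h
    simp


lemma q_two (z : MvPolynomial (Fin m) (ZMod 2) ⧸ J m) : z + z = 0 := by
  have h2 : ((2:ℕ) : MvPolynomial (Fin m) (ZMod 2)) = 0 := by
    rw [← map_natCast (C : ZMod 2 →+* MvPolynomial (Fin m) (ZMod 2)) 2]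
    have : ((2:ℕ) : ZMod 2) = 0 := by decide
    rw [this, map_zero]
  have h2' : ((2:ℕ) : MvPolynomial (Fin m) (ZMod 2) ⧸ J m) = 0 := by
    rw [← map_natCast (Ideal.Quotient.mk (J m)) 2, h2, map_zero]
  have : z + z = ((2:ℕ) : MvPolynomial (Fin m) (ZMod 2) ⧸ J m) * z := by
    push_cast
    ring
  rw [this, h2', zero_mul]

lemma nsmul_char2 (n : ℕ) (z : MvPolynomial (Fin m) (ZMod 2) ⧸ J m) :
    n • z = if Odd n then z else 0 := by
  induction n with
  | zero => simp
  | succ n ih =>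
    rw [succ_nsmul, ih]
    by_cases h : Odd n
    · rw [if_pos h, if_neg (by simp [Nat.odd_iff] at h ⊢; omega), q_two]
    · rw [if_neg h, if_pos (by simp [Nat.odd_iff] at h ⊢; omega), zero_add]

lemma count_odd_iff (W : Finset (Fin m)) (e σ : ℕ) :
    Odd ((Finset.filter (fun AU => AU.1 ∪ AU.2 = W)
        (Finset.powersetCard (2^e) Finset.univ ×ˢ Finset.powersetCard σ Finset.univ)).card)
      ↔ W.card = (if σ.testBit e then σ else σ + 2^e) := by
  have hp : 1 ≤ 2^e := Nat.one_le_two_pow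
  by_cases hw : W.card ≤ σ + 2^e
  · rw [count_eq W (2^e) σ hw]
    by_cases hσw : σ ≤ W.card
    · have hx : W.card - σ ≤ 2^e := by omega
      have h1 : W.card = σ + (W.card - σ) := by omega
      have h2 : σ + 2 ^ e - W.card = 2 ^ e - (W.card - σ) := by omega
      have hpm := parity_main e σ (W.card - σ) hx
      rw [← h1] at hpm
      rw [h2, hpm]
      by_cases hb : σ.testBit e
      · rw [if_pos hb, if_pos hb]
        omega
      · rw [if_neg hb, if_neg hb]
        omega
    · have h0 : W.card.choose σ = 0 := Nat.choose_eq_zero_of_lt (by omega)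
      rw [h0, zero_mul]
      constructor
      · intro h
        exact absurd h (by decide)
      · intro h
        exfalso
        by_cases hb : σ.testBit e
        · rw [if_pos hb] at h
          omega
        · rw [if_neg hb] at h
          omega
  · rw [count_zero W (2^e) σ (by omega)]
    constructor
    · intro h
      exact absurd h (by decide)
    · intro h
      exfalso
      by_cases hb : σ.testBit e
      · rw [if_pos hb] at h
        omega
      · rw [if_neg hb] at h
        omega

lemma step (e σ N : ℕ) (hσ1 : 1 ≤ σ) (hσN : σ ≤ N) :
    Ideal.Quotient.mk (J m) (esymm (Fin m) (ZMod 2) (2^e) * E m σ N)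
      = Ideal.Quotient.mk (J m) (E m (if σ.testBit e then σ else σ + 2^e) (N + 2^e)) := by
  rw [esymm_eq_sum_monomial, E, Finset.sum_mul_sum, map_sum]
  have hterm : ∀ A ∈ Finset.powersetCard (2^e) (Finset.univ : Finset (Fin m)),
      ∀ U ∈ Finset.powersetCard σ (Finset.univ : Finset (Fin m)),
      Ideal.Quotient.mk (J m) ((monomial (∑ i ∈ A, Finsupp.single i 1) (1 : ZMod 2))
          * monomial (cExp U N) 1)
        = Ideal.Quotient.mk (J m) (monomial (cExp (A ∪ U) (N + 2^e)) 1) := by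
    intro A hA U hU
    rw [Finset.mem_powersetCard] at hA hU
    have hUne : U.Nonempty := Finset.card_pos.mp (by omega)
    have h1 : (∑ i ∈ A, Finsupp.single i (1:ℕ)) = ind A := rfl
    rw [h1, q_mul_mono, ind_support, cExp_support, deg_ind,
      deg_cExp U N hUne (le_trans (le_of_eq hU.2) hσN), hA.2, Nat.add_comm (2^e) N]
  rw [Finset.sum_congr rfl (fun A hA => map_sum _ _ _)]
  rw [Finset.sum_congr rfl (fun A hA => Finset.sum_congr rfl (fun U hU => hterm A hA U hU))]
  rw [← Finset.sum_product']
  rw [← Finset.sum_fiberwise_of_maps_to (g := fun x => x.1 ∪ x.2)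
    (t := (Finset.univ : Finset (Fin m)).powerset) (fun x _ => Finset.mem_powerset.mpr
      (Finset.subset_univ _))]
  have hfib : ∀ W ∈ (Finset.univ : Finset (Fin m)).powerset,
      ∑ x ∈ (Finset.powersetCard (2^e) Finset.univ ×ˢ Finset.powersetCard σ
          Finset.univ).filter (fun x => x.1 ∪ x.2 = W),
        Ideal.Quotient.mk (J m) (monomial (cExp (x.1 ∪ x.2) (N + 2^e)) 1)
      = if W.card = (if σ.testBit e then σ else σ + 2^e) then
          Ideal.Quotient.mk (J m) (monomial (cExp W (N + 2^e)) 1) else 0 := by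
    intro W _
    rw [Finset.sum_congr rfl (fun x hx => by
      rw [(Finset.mem_filter.mp hx).2]), Finset.sum_const, nsmul_char2]
    exact if_congr (count_odd_iff W e σ) rfl rfl
  rw [Finset.sum_congr rfl hfib, ← Finset.sum_filter, ← Finset.powersetCard_eq_filter]
  rw [E, map_sum]


lemma sum_image_le {n : ℕ} (g : Fin n → ℕ) :
    (Finset.image g Finset.univ).sum id ≤ ∑ a, g a := by
  rw [← Finset.sum_fiberwise_of_maps_to (g := g) (t := Finset.image g Finset.univ)
    (fun x _ => Finset.mem_image_of_mem g (Finset.mem_univ x)) (fun a => g a)]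
  apply Finset.sum_le_sum
  intro v hv
  obtain ⟨a, _, ha⟩ := Finset.mem_image.mp hv
  have hmem : a ∈ Finset.filter (fun x => g x = v) Finset.univ := by
    simp [ha]
  have := Finset.single_le_sum (f := fun x => g x) (fun _ _ => Nat.zero_le _) hmem
  simpa [ha] using this

lemma image_powers {n : ℕ} (f : Fin n → ℕ) :
    ∀ v ∈ Finset.image (fun a => 2 ^ f a) Finset.univ, ∃ c, v = 2^c := by
  intro v hv
  obtain ⟨a, _, ha⟩ := Finset.mem_image.mp hv
  exact ⟨f a, ha.symm⟩

lemma main_lemma : ∀ (s : ℕ) (f : Fin (s+1) → ℕ),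
    Ideal.Quotient.mk (J m) (∏ a, esymm (Fin m) (ZMod 2) (2 ^ f a))
      = Ideal.Quotient.mk (J m)
          (E m ((Finset.image (fun a => 2 ^ f a) Finset.univ).sum id) (∑ a, 2 ^ f a)) := by
  intro s
  induction s with
  | zero =>
    intro f
    have h1 : (Finset.univ : Finset (Fin 1)) = {0} := rfl
    rw [h1, Finset.prod_singleton, Finset.sum_singleton, Finset.image_singleton,
      Finset.sum_singleton, id_eq, E_self]
  | succ s ih =>
    intro f
    have himg : Finset.image (fun a => 2 ^ f a) Finset.univ
        = insert (2 ^ f 0) (Finset.image (fun a : Fin (s+1) => 2 ^ f a.succ) Finset.univ) := by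
      ext x
      simp only [Finset.mem_image, Finset.mem_insert, Finset.mem_univ, true_and]
      rw [Fin.exists_fin_succ]
      constructor
      · rintro (h | ⟨i, h⟩)
        · left; exact h.symm
        · right; exact ⟨i, h⟩
      · rintro (h | ⟨i, h⟩)
        · left; exact h.symm
        · right; exact ⟨i, h⟩
    have hS'pow := image_powers (fun a : Fin (s+1) => f a.succ)
    have hne : (Finset.image (fun a : Fin (s+1) => 2 ^ f a.succ) Finset.univ).Nonempty :=
      ⟨2 ^ f (0 : Fin (s+1)).succ, Finset.mem_image_of_mem _ (Finset.mem_univ _)⟩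
    have hid : (Finset.image (fun a : Fin (s+1) => 2 ^ f a.succ) Finset.univ).sum id
        = ∑ x ∈ Finset.image (fun a : Fin (s+1) => 2 ^ f a.succ) Finset.univ, id x := rfl
    have hσ1 : 1 ≤ (Finset.image (fun a : Fin (s+1) => 2 ^ f a.succ) Finset.univ).sum id := by
      have hpos : 0 < ∑ x ∈ Finset.image (fun a : Fin (s+1) => 2 ^ f a.succ) Finset.univ,
          id x := by
        refine Finset.sum_pos ?_ hne
        intro v hv
        obtain ⟨c, rfl⟩ := hS'pow v hv
        exact Nat.two_pow_pos c
      omega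
    have hσN : (Finset.image (fun a : Fin (s+1) => 2 ^ f a.succ) Finset.univ).sum id
        ≤ ∑ a : Fin (s+1), 2 ^ f a.succ := sum_image_le _
    have hσeq : (if ((Finset.image (fun a : Fin (s+1) => 2 ^ f a.succ) Finset.univ).sum
          id).testBit (f 0)
          then (Finset.image (fun a : Fin (s+1) => 2 ^ f a.succ) Finset.univ).sum id
          else (Finset.image (fun a : Fin (s+1) => 2 ^ f a.succ) Finset.univ).sum id + 2 ^ f 0)
        = (Finset.image (fun a : Fin (s+1+1) => 2 ^ f a) Finset.univ).sum id := by
      rw [himg]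
      by_cases hmem : (2 ^ f 0) ∈ Finset.image (fun a : Fin (s+1) => 2 ^ f a.succ) Finset.univ
      · rw [Finset.insert_eq_self.mpr hmem,
          if_pos ((sum_powers_testBit _ hS'pow (f 0)).mpr hmem)]
      · rw [Finset.sum_insert hmem, if_neg (fun h =>
          hmem ((sum_powers_testBit _ hS'pow (f 0)).mp h)), id_eq]
        omega
    have hNeq : (∑ a : Fin (s+1), 2 ^ f a.succ) + 2 ^ f 0 = ∑ a : Fin (s+1+1), 2 ^ f a := by
      conv_rhs => rw [Fin.sum_univ_succ]
      omega
    rw [Fin.prod_univ_succ, map_mul, ih (fun a => f a.succ), ← map_mul,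
      step (f 0) _ _ hσ1 hσN, hσeq, hNeq]

end Aux17


open Aux17 in
/-- Let `2^(j 1), …, 2^(j s)` and `2^(k 1), …, 2^(k t)` be two lists of powers of `2`, each at
most `m`, having the same sum and the same underlying set of values.  Then
`e (2^(j 1)) ⋯ e (2^(j s)) - e (2^(k 1)) ⋯ e (2^(k t))` lies in the ideal `J m`, where `e d`
denotes the `d`-th elementary symmetric polynomial in `F₂[t 1, …, t m]`. -/
theorem stmt_17 (m : ℕ) (hm : 1 ≤ m) (s t : ℕ) (j : Fin s → ℕ) (k : Fin t → ℕ)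
    (hjm : ∀ a, 2 ^ j a ≤ m) (hkm : ∀ b, 2 ^ k b ≤ m)
    (hsum : (∑ a, 2 ^ j a) = ∑ b, 2 ^ k b)
    (hset : Set.range (fun a => 2 ^ j a) = Set.range (fun b => 2 ^ k b)) :
    (∏ a, esymm (Fin m) (ZMod 2) (2 ^ j a)) - ∏ b, esymm (Fin m) (ZMod 2) (2 ^ k b)
      ∈ J m := by

  rcases Nat.eq_zero_or_pos s with rfl | hs
  · have ht : t = 0 := by
      by_contra ht
      have h1 : Set.range (fun a : Fin 0 => 2 ^ j a) = ∅ := by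
        simp
      rw [h1] at hset
      have h2 : 2 ^ k ⟨0, by omega⟩ ∈ Set.range (fun b => 2 ^ k b) :=
        ⟨⟨0, by omega⟩, rfl⟩
      rw [← hset] at h2
      exact h2
    subst ht
    simp only [Finset.univ_eq_empty, Finset.prod_empty, sub_self]
    exact Ideal.zero_mem _
  · have ht : 0 < t := by
      by_contra ht
      have ht0 : t = 0 := by omega
      subst ht0
      have h1 : Set.range (fun b : Fin 0 => 2 ^ k b) = ∅ := by
        simp
      rw [h1] at hset
      have h2 : 2 ^ j ⟨0, by omega⟩ ∈ Set.range (fun a => 2 ^ j a) :=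
        ⟨⟨0, by omega⟩, rfl⟩
      rw [hset] at h2
      exact h2
    obtain ⟨s', rfl⟩ : ∃ s', s = s' + 1 := ⟨s - 1, by omega⟩
    obtain ⟨t', rfl⟩ : ∃ t', t = t' + 1 := ⟨t - 1, by omega⟩
    have himg : Finset.image (fun a => 2 ^ j a) Finset.univ
        = Finset.image (fun b => 2 ^ k b) Finset.univ := by
      apply Finset.coe_injective
      simp only [Finset.coe_image, Finset.coe_univ, Set.image_univ]
      rw [hset]
    refine Ideal.Quotient.eq.mp ?_
    rw [main_lemma s' j, main_lemma t' k, himg, hsum]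
end
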